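/- arXiv:1110.0938 — 4 statements merged into one kernel-verified Lean document; each statement's English description precedes it below -/
import Mathlib

section
/- Let γ = 1/(4·3^α·(4β+2)) and let ρ > 0. If a finite set L of n links is ρ-amenable, then there exists a subset S ⊆ L with |S| ≥ γ·n/(4ρ) such that for every ℓ' ∈ S, Σ_{ℓ ∈ S, ℓ ≤ ℓ'} f_ℓ(ℓ') ≤ γ; in particular Ω(n) links of L can be scheduled in a single slot. -/
open scoped Classical
noncomputable section

/-- A point in the Euclidean plane. -/
abbrev Point : Type := EuclideanSpace ℝ (Fin 2)

/-- A link is an ordered pair (sender, receiver) of points. -/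
abbrev Link : Type := Point × Point

/-- The length of a link: the distance from its sender to its receiver. -/
def linkLen (l : Link) : ℝ := dist l.1 l.2

/-- The set `S` of links satisfies all the SINR constraints under the power
assignment `Pw` (path-loss exponent `α`, SINR threshold `β`, noise ignored). -/
def FeasibleWith (α β : ℝ) (S : Finset Link) (Pw : Link → ℝ) : Prop :=
  ∀ l ∈ S, β * ∑ l' ∈ S.erase l, Pw l' / dist l'.1 l.2 ^ α ≤ Pw l / linkLen l ^ α

/-- A set of links is feasible if some positive power assignment satisfies all
its SINR constraints. -/
def Feasible (α β : ℝ) (S : Finset Link) : Prop :=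
  ∃ Pw : Link → ℝ, (∀ l ∈ S, 0 < Pw l) ∧ FeasibleWith α β S Pw

/-- `S` is a partition of the link set `L` into `k` (possibly empty) sets. -/
def IsPartition (L : Finset Link) {k : ℕ} (S : Fin k → Finset Link) : Prop :=
  (∀ i, S i ⊆ L) ∧ (∀ l ∈ L, ∃ i, l ∈ S i) ∧
    ∀ i j : Fin k, i ≠ j → Disjoint (S i) (S j)

/-- Total Euclidean edge length of a graph on the point set `P`. -/
def treeWeight (P : Finset Point) (T : SimpleGraph ↥P) : ℝ :=
  (1 / 2) * ∑ p ∈ P.attach, ∑ q ∈ P.attach,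
    if T.Adj p q then dist (p : Point) (q : Point) else 0

/-- `T` is a minimum spanning tree of `P`: a spanning tree of the complete
graph on `P` of minimum total Euclidean edge length. -/
def IsMST (P : Finset Point) (T : SimpleGraph ↥P) : Prop :=
  T.IsTree ∧ ∀ T' : SimpleGraph ↥P, T'.IsTree → treeWeight P T ≤ treeWeight P T'

/-- `L` is an orientation of the edges of `T` into links: every link of `L`
is an oriented edge of `T`, and every edge of `T` appears in exactly one of
its two orientations. -/
def IsOrientationOf (P : Finset Point) (T : SimpleGraph ↥P) (L : Finset Link) : Prop :=
  (∀ l ∈ L, ∃ p q : ↥P, T.Adj p q ∧ l = ((p : Point), (q : Point))) ∧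
  (∀ p q : ↥P, T.Adj p q →
    (((p : Point), (q : Point)) ∈ L ∨ ((q : Point), (p : Point)) ∈ L)) ∧
  (∀ p q : ↥P, T.Adj p q →
    ¬((((p : Point), (q : Point)) ∈ L) ∧ (((q : Point), (p : Point)) ∈ L)))

/-- The interference measure `f_ℓ(ℓ')`: equals
`min(1, ℓ^α / min(d(s,r'), d(s',r))^α)` when `ℓ` is no longer than `ℓ'` and
`ℓ ≠ ℓ'`, and `0` otherwise. -/
def flink (α : ℝ) (l l' : Link) : ℝ :=
  if linkLen l ≤ linkLen l' ∧ l ≠ l' then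
    min 1 (linkLen l ^ α / min (dist l.1 l'.2) (dist l'.1 l.2) ^ α)
  else 0

/-- A finite set `L` of links is `ρ`-amenable if for every link `ℓ`
(not necessarily in `L`), `Σ_{ℓ' ∈ L, ℓ' ≥ ℓ} f_ℓ(ℓ') ≤ ρ`. -/
def Amenable (α ρ : ℝ) (L : Finset Link) : Prop :=
  ∀ l : Link, l.1 ≠ l.2 →
    ∑ l' ∈ L.filter (fun l' => linkLen l ≤ linkLen l'), flink α l l' ≤ ρ

lemma flink_nonneg (α : ℝ) (l l' : Link) : 0 ≤ flink α l l' := by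
  unfold flink
  split
  · exact le_min zero_le_one (div_nonneg (Real.rpow_nonneg dist_nonneg _)
      (Real.rpow_nonneg (le_min dist_nonneg dist_nonneg) _))
  · exact le_refl 0

lemma flink_eq_zero_of_not_le (α : ℝ) (l l' : Link) (h : ¬ linkLen l ≤ linkLen l') :
    flink α l l' = 0 := by
  unfold flink; rw [if_neg]; tauto

lemma flink_self (α : ℝ) (l : Link) : flink α l l = 0 := by
  unfold flink; rw [if_neg]; tauto

lemma sample_sum (p : ℝ) (M A : Finset Link) (hA : A ⊆ M) :
    ∑ S ∈ M.powerset, (if A ⊆ S then p ^ S.card * (1 - p) ^ (M \ S).card else 0)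
      = p ^ A.card := by
  have h := Finset.prod_add (fun _ : Link => p) (fun i => if i ∈ A then 0 else (1 - p)) M
  have hL : ∏ i ∈ M, ((fun _ : Link => p) i + (fun i => if i ∈ A then 0 else (1 - p)) i)
      = p ^ A.card := by
    have h1 : ∀ i ∈ M, (p + if i ∈ A then 0 else (1 - p)) = (if i ∈ A then p else 1) := by
      intro i _; split <;> ring
    rw [Finset.prod_congr rfl h1, Finset.prod_ite_mem, Finset.inter_eq_right.mpr hA,
        Finset.prod_const]
  have hR : ∀ S ∈ M.powerset,
      (∏ _i ∈ S, p) * ∏ i ∈ M \ S, (if i ∈ A then 0 else (1 - p))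
      = (if A ⊆ S then p ^ S.card * (1 - p) ^ (M \ S).card else 0) := by
    intro S _
    by_cases hAS : A ⊆ S
    · rw [if_pos hAS, Finset.prod_const]
      congr 1
      calc ∏ i ∈ M \ S, (if i ∈ A then 0 else (1 - p))
          = ∏ _i ∈ M \ S, (1 - p) := by
            apply Finset.prod_congr rfl
            intro i hi
            rw [Finset.mem_sdiff] at hi
            rw [if_neg (fun hiA => hi.2 (hAS hiA))]
        _ = (1 - p) ^ (M \ S).card := Finset.prod_const _
    · rw [if_neg hAS]
      obtain ⟨a, haA, haS⟩ := Finset.not_subset.mp hAS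
      rw [mul_eq_zero]
      right
      exact Finset.prod_eq_zero (Finset.mem_sdiff.mpr ⟨hA haA, haS⟩) (if_pos haA)
  rw [← Finset.sum_congr rfl hR, ← h, hL]

lemma sample_zero (p : ℝ) (M : Finset Link) :
    ∑ S ∈ M.powerset, p ^ S.card * (1 - p) ^ (M \ S).card = 1 := by
  have := sample_sum p M ∅ (Finset.empty_subset M)
  simpa using this

lemma sample_one (p : ℝ) (M : Finset Link) (v : Link) (hv : v ∈ M) :
    ∑ S ∈ M.powerset, (if v ∈ S then p ^ S.card * (1 - p) ^ (M \ S).card else 0) = p := by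
  have := sample_sum p M {v} (Finset.singleton_subset_iff.mpr hv)
  simpa [Finset.singleton_subset_iff] using this

lemma sample_two (p : ℝ) (M : Finset Link) (v w : Link) (hv : v ∈ M) (hw : w ∈ M)
    (hvw : v ≠ w) :
    ∑ S ∈ M.powerset, (if v ∈ S ∧ w ∈ S then p ^ S.card * (1 - p) ^ (M \ S).card else 0)
      = p ^ 2 := by
  have h := sample_sum p M {v, w} (by
    rw [Finset.insert_subset_iff, Finset.singleton_subset_iff]; exact ⟨hv, hw⟩)
  rw [Finset.card_insert_of_notMem (by simp [hvw]), Finset.card_singleton] at h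
  rw [← h]
  apply Finset.sum_congr rfl
  intro S _
  congr 1
  simp [Finset.insert_subset_iff, Finset.singleton_subset_iff]

lemma one_le_rho_of_nonempty (α ρ : ℝ) (L : Finset Link)
    (hnd : ∀ l ∈ L, l.1 ≠ l.2) (hA : Amenable α ρ L) (hne : L.Nonempty) : 1 ≤ ρ := by
  obtain ⟨l, hl⟩ := hne
  have hnd' := hnd l hl
  have hlen : 0 < linkLen l := dist_pos.mpr hnd'
  set m : Point := midpoint ℝ l.1 l.2 with hm
  have hdm2 : dist m l.2 = linkLen l / 2 := by
    rw [hm, dist_midpoint_right]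
    simp [linkLen]
    ring
  have hdm1 : dist m l.1 = linkLen l / 2 := by
    rw [hm, dist_midpoint_left]
    simp [linkLen]
    ring
  set e : Link := (m, l.2) with he
  have hlene : linkLen e = linkLen l / 2 := hdm2
  have hend : e.1 ≠ e.2 := by
    intro h
    have h0 : dist e.1 e.2 = 0 := by rw [h]; simp
    have : linkLen e = 0 := h0
    rw [hlene] at this; linarith
  have hne' : e ≠ l := by
    intro h
    have h1 : m = l.1 := congrArg Prod.fst h
    have : dist m l.1 = 0 := by rw [h1]; simp
    rw [hdm1] at this; linarith
  have hfe : flink α e l = 1 := by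
    unfold flink
    rw [if_pos ⟨by rw [hlene]; linarith, hne'⟩]
    have hmin : min (dist e.1 l.2) (dist l.1 e.2) = linkLen l / 2 := by
      show min (dist m l.2) (dist l.1 l.2) = linkLen l / 2
      rw [hdm2]
      exact min_eq_left (by show linkLen l / 2 ≤ linkLen l; linarith)
    rw [hmin, hlene, div_self (ne_of_gt (Real.rpow_pos_of_pos (by linarith) α)), min_self]
  have hmem : l ∈ L.filter (fun l' => linkLen e ≤ linkLen l') := by
    rw [Finset.mem_filter]
    exact ⟨hl, by rw [hlene]; linarith⟩
  have h1le : (1 : ℝ) ≤ ∑ l' ∈ L.filter (fun l' => linkLen e ≤ linkLen l'), flink α e l' := by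
    rw [← hfe]
    exact Finset.single_le_sum (fun i _ => flink_nonneg α e i) hmem
  linarith [hA e hend]

/-- every `ρ`-amenable set `L` of `n` links contains a subset `S`
of at least `γ·n/(4ρ)` links all of which satisfy Kesselheim's condition
`Σ_{ℓ ∈ S, ℓ ≤ ℓ'} f_ℓ(ℓ') ≤ γ`; in particular, `Ω(n)` links of `L` can be
scheduled in a single slot. -/
theorem amenable_has_large_feasible_subset (α β ρ : ℝ) (hα : 2 < α) (hβ : 1 ≤ β)
    (hρ : 0 < ρ) (γ : ℝ) (hγ : γ = 1 / (4 * 3 ^ α * (4 * β + 2)))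
    (L : Finset Link) (hnd : ∀ l ∈ L, l.1 ≠ l.2) (hA : Amenable α ρ L) :
    ∃ S ⊆ L, γ * L.card / (4 * ρ) ≤ (S.card : ℝ) ∧
      ∀ l' ∈ S,
        ∑ l ∈ S.filter (fun l => linkLen l ≤ linkLen l'), flink α l l' ≤ γ := by
  have h3 : (1 : ℝ) ≤ (3 : ℝ) ^ α := Real.one_le_rpow (by norm_num) (by linarith)
  have hD : (24 : ℝ) ≤ 4 * 3 ^ α * (4 * β + 2) := by nlinarith
  have hγpos : 0 < γ := by rw [hγ]; positivity
  have hγ24 : γ ≤ 1 / 24 := by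
    rw [hγ]
    apply one_div_le_one_div_of_le <;> linarith
  rcases Finset.eq_empty_or_nonempty L with hL0 | hLne
  · exact ⟨∅, Finset.empty_subset L, by simp [hL0], by simp⟩
  have hρ1 : 1 ≤ ρ := one_le_rho_of_nonempty α ρ L hnd hA hLne
  set n : ℝ := (L.card : ℝ) with hn
  set p : ℝ := γ / (2 * ρ) with hp
  have hp_pos : 0 < p := div_pos hγpos (by linarith)
  have hp1 : p < 1 := by
    rw [hp, div_lt_one (by linarith)]
    linarith
  set μ : Finset Link → ℝ := fun S => p ^ S.card * (1 - p) ^ (L \ S).card with hμ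
  have hμpos : ∀ S : Finset Link, 0 < μ S :=
    fun S => mul_pos (pow_pos hp_pos _) (pow_pos (by linarith) _)
  -- filter removal lemmas
  have hfilter : ∀ (v : Link) (S : Finset Link),
      ∑ l ∈ S.filter (fun l => linkLen l ≤ linkLen v), flink α l v
        = ∑ l ∈ S, flink α l v := by
    intro v S
    rw [Finset.sum_filter]
    apply Finset.sum_congr rfl
    intro l _
    by_cases h : linkLen l ≤ linkLen v
    · rw [if_pos h]
    · rw [if_neg h, flink_eq_zero_of_not_le α l v h]
  have hfilter2 : ∀ l : Link,
      ∑ l' ∈ L.filter (fun l' => linkLen l ≤ linkLen l'), flink α l l'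
        = ∑ l' ∈ L, flink α l l' := by
    intro l
    rw [Finset.sum_filter]
    apply Finset.sum_congr rfl
    intro l' _
    by_cases h : linkLen l ≤ linkLen l'
    · rw [if_pos h]
    · rw [if_neg h, flink_eq_zero_of_not_le α l l' h]
  have hAm : ∀ l ∈ L, ∑ v ∈ L, flink α l v ≤ ρ := by
    intro l hl
    rw [← hfilter2 l]
    exact hA l (hnd l hl)
  -- E0
  have E0 : ∑ S ∈ L.powerset, μ S = 1 := sample_zero p L
  -- E1
  have E1 : ∑ S ∈ L.powerset, μ S * (S.card : ℝ) = p * n := by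
    have step : ∀ S ∈ L.powerset, μ S * (S.card : ℝ)
        = ∑ v ∈ L, (if v ∈ S then μ S else 0) := by
      intro S hS
      rw [Finset.mem_powerset] at hS
      rw [Finset.sum_ite_mem, Finset.inter_eq_right.mpr hS, Finset.sum_const,
        nsmul_eq_mul, mul_comm]
    rw [Finset.sum_congr rfl step, Finset.sum_comm,
      Finset.sum_congr rfl (fun v hv => sample_one p L v hv), Finset.sum_const,
      nsmul_eq_mul, mul_comm]
  -- E2
  have E2 : ∑ S ∈ L.powerset, μ S * (∑ v ∈ S, ∑ l ∈ S, flink α l v) ≤ p ^ 2 * (ρ * n) := by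
    have step : ∀ S ∈ L.powerset, μ S * (∑ v ∈ S, ∑ l ∈ S, flink α l v)
        = ∑ v ∈ L, ∑ l ∈ L, (if v ∈ S ∧ l ∈ S then μ S * flink α l v else 0) := by
      intro S hS
      rw [Finset.mem_powerset] at hS
      have h1 : ∀ v ∈ L, ∑ l ∈ L, (if v ∈ S ∧ l ∈ S then μ S * flink α l v else 0)
          = (if v ∈ S then ∑ l ∈ S, μ S * flink α l v else 0) := by
        intro v _
        by_cases hv : v ∈ S
        · rw [if_pos hv]
          simp only [hv, true_and]
          rw [Finset.sum_ite_mem, Finset.inter_eq_right.mpr hS]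
        · simp [hv]
      rw [Finset.sum_congr rfl h1, Finset.sum_ite_mem, Finset.inter_eq_right.mpr hS,
        Finset.mul_sum]
      apply Finset.sum_congr rfl
      intro v _
      rw [Finset.mul_sum]
    rw [Finset.sum_congr rfl step, Finset.sum_comm]
    have inner : ∀ v ∈ L, ∑ l ∈ L,
        (∑ S ∈ L.powerset, (if v ∈ S ∧ l ∈ S then μ S * flink α l v else 0))
        = ∑ l ∈ L, p ^ 2 * flink α l v := by
      intro v hv
      apply Finset.sum_congr rfl
      intro l hl
      by_cases hvl : v = l
      · subst hvl
        simp [flink_self]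
      · have h2 := sample_two p L v l hv hl hvl
        calc ∑ S ∈ L.powerset, (if v ∈ S ∧ l ∈ S then μ S * flink α l v else 0)
            = flink α l v * ∑ S ∈ L.powerset, (if v ∈ S ∧ l ∈ S then μ S else 0) := by
              rw [Finset.mul_sum]
              apply Finset.sum_congr rfl
              intro S _
              split <;> ring
          _ = flink α l v * p ^ 2 := by rw [hμ] at *; rw [h2]
          _ = p ^ 2 * flink α l v := mul_comm _ _
    have swap2 : ∀ v ∈ L.powerset, True := fun _ _ => trivial
    clear swap2
    have swap2 : ∀ v ∈ L,
        (∑ S ∈ L.powerset, ∑ l ∈ L, (if v ∈ S ∧ l ∈ S then μ S * flink α l v else 0))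
        = ∑ l ∈ L, ∑ S ∈ L.powerset, (if v ∈ S ∧ l ∈ S then μ S * flink α l v else 0) :=
      fun v _ => Finset.sum_comm
    rw [Finset.sum_congr rfl swap2, Finset.sum_congr rfl inner]
    have hXle : ∑ l ∈ L, ∑ v ∈ L, flink α l v ≤ ρ * n := by
      calc ∑ l ∈ L, ∑ v ∈ L, flink α l v ≤ ∑ _l ∈ L, ρ :=
            Finset.sum_le_sum (fun l hl => hAm l hl)
        _ = ρ * n := by rw [Finset.sum_const, nsmul_eq_mul, mul_comm]
    calc ∑ v ∈ L, ∑ l ∈ L, p ^ 2 * flink α l v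
        = p ^ 2 * ∑ v ∈ L, ∑ l ∈ L, flink α l v := by
          rw [Finset.mul_sum]
          exact Finset.sum_congr rfl (fun v _ => (Finset.mul_sum _ _ _).symm)
      _ = p ^ 2 * ∑ l ∈ L, ∑ v ∈ L, flink α l v := by rw [Finset.sum_comm]
      _ ≤ p ^ 2 * (ρ * n) := by
          apply mul_le_mul_of_nonneg_left hXle (by positivity)
  -- combine: expected value of |Good| lower bound
  have Etot : γ * n / (4 * ρ) ≤
      ∑ S ∈ L.powerset, μ S * ((S.card : ℝ) - (∑ v ∈ S, ∑ l ∈ S, flink α l v) / γ) := by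
    have expand : ∑ S ∈ L.powerset, μ S * ((S.card : ℝ) - (∑ v ∈ S, ∑ l ∈ S, flink α l v) / γ)
        = (∑ S ∈ L.powerset, μ S * (S.card : ℝ))
          - (∑ S ∈ L.powerset, μ S * (∑ v ∈ S, ∑ l ∈ S, flink α l v)) / γ := by
      have h1 : ∀ S ∈ L.powerset,
          μ S * ((S.card : ℝ) - (∑ v ∈ S, ∑ l ∈ S, flink α l v) / γ)
          = μ S * (S.card : ℝ) - (μ S * (∑ v ∈ S, ∑ l ∈ S, flink α l v)) / γ := by
        intro S _
        field_simp
      rw [Finset.sum_congr rfl h1, Finset.sum_sub_distrib, Finset.sum_div]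
    rw [expand, E1]
    have hdivle : (∑ S ∈ L.powerset, μ S * (∑ v ∈ S, ∑ l ∈ S, flink α l v)) / γ
        ≤ (p ^ 2 * (ρ * n)) / γ := by
      exact (div_le_div_iff_of_pos_right hγpos).mpr E2
    have heq : p * n - (p ^ 2 * (ρ * n)) / γ = γ * n / (4 * ρ) := by
      rw [hp]
      field_simp
      ring
    linarith
  -- pick a good S
  have hexists : ∃ S ∈ L.powerset,
      γ * n / (4 * ρ) ≤ (S.card : ℝ) - (∑ v ∈ S, ∑ l ∈ S, flink α l v) / γ := by
    by_contra hcon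
    push_neg at hcon
    have hlt : ∑ S ∈ L.powerset, μ S * ((S.card : ℝ) - (∑ v ∈ S, ∑ l ∈ S, flink α l v) / γ)
        < ∑ S ∈ L.powerset, μ S * (γ * n / (4 * ρ)) := by
      apply Finset.sum_lt_sum_of_nonempty
      · exact ⟨∅, Finset.empty_mem_powerset L⟩
      · intro S hS
        exact mul_lt_mul_of_pos_left (hcon S hS) (hμpos S)
    rw [← Finset.sum_mul, E0, one_mul] at hlt
    linarith
  obtain ⟨S, hSL, hSval⟩ := hexists
  rw [Finset.mem_powerset] at hSL
  set G : Finset Link := S.filter (fun v => ∑ l ∈ S, flink α l v ≤ γ) with hG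
  have hGS : G ⊆ S := Finset.filter_subset _ _
  -- card bound: γ * (S.card - G.card) ≤ total interference
  have hcard : (S.card : ℝ) - (∑ v ∈ S, ∑ l ∈ S, flink α l v) / γ ≤ (G.card : ℝ) := by
    have hsplit : G.card + (S.filter (fun v => ¬ (∑ l ∈ S, flink α l v ≤ γ))).card = S.card :=
      Finset.card_filter_add_card_filter_not _
    set B : Finset Link := S.filter (fun v => ¬ (∑ l ∈ S, flink α l v ≤ γ)) with hB
    have hBbound : γ * (B.card : ℝ) ≤ ∑ v ∈ S, ∑ l ∈ S, flink α l v := by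
      calc γ * (B.card : ℝ) = ∑ _v ∈ B, γ := by rw [Finset.sum_const, nsmul_eq_mul, mul_comm]
        _ ≤ ∑ v ∈ B, ∑ l ∈ S, flink α l v := by
            apply Finset.sum_le_sum
            intro v hv
            rw [hB, Finset.mem_filter] at hv
            linarith [hv.2]
        _ ≤ ∑ v ∈ S, ∑ l ∈ S, flink α l v := by
            apply Finset.sum_le_sum_of_subset_of_nonneg (Finset.filter_subset _ _)
            intro v _ _
            exact Finset.sum_nonneg (fun l _ => flink_nonneg α l v)
    have hBle : (B.card : ℝ) ≤ (∑ v ∈ S, ∑ l ∈ S, flink α l v) / γ :=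
      (le_div_iff₀' hγpos).mpr hBbound
    have hc : (S.card : ℝ) = (G.card : ℝ) + (B.card : ℝ) := by
      rw [← hsplit]; push_cast; ring
    linarith
  refine ⟨G, hGS.trans hSL, by linarith, ?_⟩
  intro l' hl'
  rw [hfilter l' G]
  have hl'S := hGS hl'
  rw [hG, Finset.mem_filter] at hl'
  calc ∑ l ∈ G, flink α l l' ≤ ∑ l ∈ S, flink α l l' := by
        apply Finset.sum_le_sum_of_subset_of_nonneg hGS
        intro l _ _
        exact flink_nonneg α l l'
    _ ≤ γ := hl'.2
end
end

section
/- Let P be a finite point set in ℝ², let T be a minimum spanning tree of P, and let P' be the set of points of P that are incident to at least one edge of T of length at least 1. Then every closed disc of radius 1/4 contains at most 9 points of P'. -/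
open scoped Classical
noncomputable section

open SimpleGraph in
private lemma acyclic_sup_edge {V : Type*} {H : SimpleGraph V} (hH : H.IsAcyclic) {u v : V}
    (huv : ¬ H.Reachable u v) : (H ⊔ edge u v).IsAcyclic := by
  intro x c hc
  by_cases he : s(u, v) ∈ c.edges
  · have h2 := (adj_and_reachable_delete_edges_iff_exists_cycle.mpr ⟨x, c, hc, he⟩).2
    apply huv
    refine h2.mono fun a b hab => ?_
    rcases hab with ⟨h1 | h1, hn⟩
    · exact h1
    · exact absurd h1 hn
  · have hsub : ∀ e ∈ c.edges, e ∈ H.edgeSet := by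
      intro e hec
      have h1 := c.edges_subset_edgeSet hec
      rw [edgeSet_sup] at h1
      rcases h1 with h1 | h1
      · exact h1
      · exfalso
        rw [edge, edgeSet_fromEdgeSet, Set.mem_diff, Set.mem_singleton_iff] at h1
        exact he (h1.1 ▸ hec)
    exact hH (c.transfer H hsub) (hc.transfer hsub)

open SimpleGraph in
private lemma reach_endpoints_aux {V : Type*} {T : SimpleGraph V} (a b : V) {x y : V}
    (w : T.Walk x y) :
    (T.deleteEdges {s(a,b)}).Reachable x y ∨ (T.deleteEdges {s(a,b)}).Reachable x a ∨
      (T.deleteEdges {s(a,b)}).Reachable x b := by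
  induction w with
  | nil => exact Or.inl Reachable.rfl
  | cons h p ih =>
    rename_i x₁ x₂ y₁
    by_cases hxy : s(x₁, x₂) = s(a, b)
    · rw [Sym2.eq_iff] at hxy
      rcases hxy with ⟨rfl, rfl⟩ | ⟨rfl, rfl⟩
      · exact Or.inr (Or.inl Reachable.rfl)
      · exact Or.inr (Or.inr Reachable.rfl)
    · have hadj : (T.deleteEdges {s(a,b)}).Adj x₁ x₂ :=
        deleteEdges_adj.mpr ⟨h, by simpa using hxy⟩
      rcases ih with h1 | h1 | h1
      · exact Or.inl (hadj.reachable.trans h1)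
      · exact Or.inr (Or.inl (hadj.reachable.trans h1))
      · exact Or.inr (Or.inr (hadj.reachable.trans h1))

private lemma sum_sum_pair {α : Type*} [DecidableEq α] (s : Finset α) {a b : α}
    (ha : a ∈ s) (hb : b ∈ s) (C : ℝ) :
    ∑ p ∈ s, ∑ q ∈ s, (if p = a ∧ q = b then C else 0) = C := by
  have hinner : ∀ p, (∑ q ∈ s, if p = a ∧ q = b then C else 0) = if p = a then C else 0 := by
    intro p
    by_cases h : p = a
    · simp [h, Finset.sum_ite_eq' s b (fun _ => C), hb]
    · simp [h]
  rw [Finset.sum_congr rfl (fun p _ => hinner p), Finset.sum_ite_eq' s a (fun _ => C), if_pos ha]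

open SimpleGraph in
private lemma treeWeight_swap {P : Finset Point} (T : SimpleGraph ↥P) {a b u v : ↥P}
    (hab : T.Adj a b) (hne : u ≠ v) (hTuv : ¬ T.Adj u v) (hsym : s(u,v) ≠ s(a,b)) :
    treeWeight P (T.deleteEdges {s(a,b)} ⊔ edge u v)
      = treeWeight P T - dist (a : Point) (b : Point) + dist (u : Point) (v : Point) := by
  set T' := T.deleteEdges {s(a,b)} ⊔ edge u v with hT'
  have key : ∀ p q : ↥P,
      (@ite ℝ (T'.Adj p q) (Classical.propDecidable _) (dist (p:Point) (q:Point)) 0)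
      = (@ite ℝ (T.Adj p q) (Classical.propDecidable _) (dist (p:Point) (q:Point)) 0)
        - (if s(p,q) = s(a,b) then dist (p:Point) (q:Point) else 0)
        + (if s(p,q) = s(u,v) then dist (p:Point) (q:Point) else 0) := by
    intro p q
    by_cases h1 : s(p,q) = s(a,b)
    · have h2 : s(p,q) ≠ s(u,v) := fun h => hsym (h.symm.trans h1)
      have hadj : T.Adj p q := by
        rw [Sym2.eq_iff] at h1
        rcases h1 with ⟨rfl, rfl⟩ | ⟨rfl, rfl⟩
        exacts [hab, hab.symm]
      have hnadj : ¬ T'.Adj p q := by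
        rw [hT', sup_adj, deleteEdges_adj, edge_adj]
        rintro (⟨-, hm⟩ | ⟨hm, -⟩)
        · exact hm (by simpa using h1)
        · rcases hm with ⟨rfl, rfl⟩ | ⟨rfl, rfl⟩
          · exact h2 rfl
          · exact h2 Sym2.eq_swap
      rw [if_pos hadj, if_neg hnadj, if_pos h1, if_neg h2]
      ring
    · by_cases h2 : s(p,q) = s(u,v)
      · have hnadj : ¬ T.Adj p q := by
          rw [Sym2.eq_iff] at h2
          rcases h2 with ⟨rfl, rfl⟩ | ⟨rfl, rfl⟩
          exacts [hTuv, fun h => hTuv h.symm]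
        have hpq : p ≠ q := by
          rw [Sym2.eq_iff] at h2
          rcases h2 with ⟨rfl, rfl⟩ | ⟨rfl, rfl⟩
          exacts [hne, hne.symm]
        have hadj : T'.Adj p q := by
          rw [hT', sup_adj, edge_adj]
          rw [Sym2.eq_iff] at h2
          exact Or.inr ⟨h2, hpq⟩
        rw [if_pos hadj, if_neg hnadj, if_neg h1, if_pos h2]
        ring
      · have hiff : T'.Adj p q ↔ T.Adj p q := by
          rw [hT', sup_adj, deleteEdges_adj, edge_adj]
          constructor
          · rintro (⟨h, -⟩ | ⟨hm, -⟩)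
            · exact h
            · exfalso
              rcases hm with ⟨rfl, rfl⟩ | ⟨rfl, rfl⟩
              · exact h2 rfl
              · exact h2 Sym2.eq_swap
          · intro h
            exact Or.inl ⟨h, by simpa using h1⟩
        by_cases hA : T.Adj p q
        · rw [if_pos (hiff.mpr hA), if_pos hA, if_neg h1, if_neg h2]
          ring
        · rw [if_neg (fun h => hA (hiff.mp h)), if_neg hA, if_neg h1, if_neg h2]
          ring
  have hsplitg : ∀ p q : ↥P, (if s(p,q) = s(a,b) then dist (p:Point) (q:Point) else 0)
      = (if p = a ∧ q = b then dist (a:Point) (b:Point) else 0)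
        + (if p = b ∧ q = a then dist (a:Point) (b:Point) else 0) := by
    intro p q
    by_cases h : s(p,q) = s(a,b)
    · rw [Sym2.eq_iff] at h
      rcases h with ⟨rfl, rfl⟩ | ⟨rfl, rfl⟩
      · simp [Sym2.eq_iff, hab.ne, hab.ne']
      · simp [Sym2.eq_iff, hab.ne, hab.ne']
        exact _root_.dist_comm _ _
    · have h1 : ¬(p = a ∧ q = b) := fun ⟨hp, hq⟩ => h (by rw [hp, hq])
      have h2 : ¬(p = b ∧ q = a) := fun ⟨hp, hq⟩ => h (by rw [hp, hq, Sym2.eq_swap])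
      rw [if_neg h, if_neg h1, if_neg h2]
      ring
  have hne' : u ≠ v := hne
  have hsplith : ∀ p q : ↥P, (if s(p,q) = s(u,v) then dist (p:Point) (q:Point) else 0)
      = (if p = u ∧ q = v then dist (u:Point) (v:Point) else 0)
        + (if p = v ∧ q = u then dist (u:Point) (v:Point) else 0) := by
    intro p q
    by_cases h : s(p,q) = s(u,v)
    · rw [Sym2.eq_iff] at h
      rcases h with ⟨rfl, rfl⟩ | ⟨rfl, rfl⟩
      · simp [Sym2.eq_iff, hne, hne.symm]
      · simp [Sym2.eq_iff, hne, hne.symm]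
        exact _root_.dist_comm _ _
    · have h1 : ¬(p = u ∧ q = v) := fun ⟨hp, hq⟩ => h (by rw [hp, hq])
      have h2 : ¬(p = v ∧ q = u) := fun ⟨hp, hq⟩ => h (by rw [hp, hq, Sym2.eq_swap])
      rw [if_neg h, if_neg h1, if_neg h2]
      ring
  have hg : ∑ p ∈ P.attach, ∑ q ∈ P.attach,
      (if s(p,q) = s(a,b) then dist (p:Point) (q:Point) else 0)
      = 2 * dist (a:Point) (b:Point) := by
    simp only [hsplitg, Finset.sum_add_distrib]
    rw [sum_sum_pair P.attach (Finset.mem_attach _ a) (Finset.mem_attach _ b),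
      sum_sum_pair P.attach (Finset.mem_attach _ b) (Finset.mem_attach _ a)]
    ring
  have hh : ∑ p ∈ P.attach, ∑ q ∈ P.attach,
      (if s(p,q) = s(u,v) then dist (p:Point) (q:Point) else 0)
      = 2 * dist (u:Point) (v:Point) := by
    simp only [hsplith, Finset.sum_add_distrib]
    rw [sum_sum_pair P.attach (Finset.mem_attach _ u) (Finset.mem_attach _ v),
      sum_sum_pair P.attach (Finset.mem_attach _ v) (Finset.mem_attach _ u)]
    ring
  unfold treeWeight
  simp only [key, Finset.sum_add_distrib, Finset.sum_sub_distrib]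
  rw [hg, hh]
  ring

open SimpleGraph in
private lemma mst_swap {P : Finset Point} {T : SimpleGraph ↥P} (hT : IsMST P T)
    {a b u v : ↥P} (hab : T.Adj a b)
    (hnr : ¬ (T.deleteEdges {s(a,b)}).Reachable u v) :
    dist (a : Point) (b : Point) ≤ dist (u : Point) (v : Point) := by
  have hne : u ≠ v := fun h => hnr (h ▸ Reachable.rfl)
  by_cases heq : s(u,v) = s(a,b)
  · rw [Sym2.eq_iff] at heq
    rcases heq with ⟨rfl, rfl⟩ | ⟨rfl, rfl⟩
    · exact le_refl _
    · exact (_root_.dist_comm _ _).le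
  · set G := T.deleteEdges {s(a,b)} with hG
    have hGle : G ≤ T := deleteEdges_le _
    have hGacyc : G.IsAcyclic := fun x c hc =>
      hT.1.IsAcyclic (c.transfer T fun e he => edgeSet_mono hGle (c.edges_subset_edgeSet he))
        (hc.transfer _)
    have hTnadj : ¬ T.Adj u v := fun h =>
      hnr ((deleteEdges_adj.mpr ⟨h, by simpa using heq⟩).reachable)
    set T' := G ⊔ edge u v with hT'
    have hT'acyc : T'.IsAcyclic := acyclic_sup_edge hGacyc hnr
    have hreach : ∀ x : ↥P, G.Reachable x a ∨ G.Reachable x b := by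
      intro x
      obtain ⟨w⟩ := hT.1.isConnected.preconnected x a
      rcases reach_endpoints_aux a b w with h | h | h
      exacts [Or.inl h, Or.inl h, Or.inr h]
    have hGleT' : G ≤ T' := le_sup_left
    have hadjuv : T'.Adj u v := by
      rw [hT', sup_adj, edge_adj]
      exact Or.inr ⟨Or.inl ⟨rfl, rfl⟩, hne⟩
    have hba : T'.Reachable b a := by
      rcases hreach u with hu | hu <;> rcases hreach v with hv | hv
      · exact absurd (hu.trans hv.symm) hnr
      · exact (hv.symm.mono hGleT').trans ((hadjuv.symm.reachable).trans (hu.mono hGleT'))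
      · exact (hu.symm.mono hGleT').trans (hadjuv.reachable.trans (hv.mono hGleT'))
      · exact absurd (hu.trans hv.symm) hnr
    have hreachT' : ∀ x : ↥P, T'.Reachable x a := by
      intro x
      rcases hreach x with h | h
      · exact h.mono hGleT'
      · exact (h.mono hGleT').trans hba
    have hT'conn : T'.Connected := by
      rw [connected_iff]
      exact ⟨fun x y => (hreachT' x).trans (hreachT' y).symm, ⟨a⟩⟩
    have htree' : T'.IsTree := ⟨hT'conn, hT'acyc⟩
    have hw := treeWeight_swap T hab hne hTnadj heq
    have hle := hT.2 T' htree'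
    rw [hT', hw] at hle
    linarith

private def toC (x : Point) : ℂ := ⟨x 0, x 1⟩

private lemma dist_toC (x y : Point) : dist x y = ‖toC x - toC y‖ := by
  rw [EuclideanSpace.dist_eq, Complex.norm_def, Complex.normSq_apply]
  congr 1
  simp [toC, Fin.sum_univ_two, Real.dist_eq, sq_abs]
  ring

private lemma cos_law (z w : ℂ) :
    ‖z - w‖ ^ 2 = ‖z‖ ^ 2 + ‖w‖ ^ 2
      - 2 * ‖z‖ * ‖w‖ * Real.cos (z.arg - w.arg) := by
  rw [Complex.sq_norm, Complex.sq_norm, Complex.sq_norm, Complex.normSq_sub]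
  have hre : (z * (starRingEnd ℂ) w).re
      = ‖z‖ * ‖w‖ * Real.cos (z.arg - w.arg) := by
    have hz := Complex.norm_mul_exp_arg_mul_I z
    have hw := Complex.norm_mul_exp_arg_mul_I w
    have hmul : z * (starRingEnd ℂ) w
        = ((‖z‖ * ‖w‖ : ℝ) : ℂ)
          * Complex.exp (((z.arg - w.arg : ℝ) : ℂ) * Complex.I) := by
      conv_lhs => rw [← hz, ← hw]
      rw [map_mul, ← Complex.exp_conj, map_mul, Complex.conj_I, Complex.conj_ofReal,
        Complex.conj_ofReal, mul_mul_mul_comm, ← Complex.exp_add, Complex.ofReal_mul]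
      congr 1
      push_cast
      ring
    rw [hmul, Complex.exp_mul_I, ← Complex.ofReal_cos, ← Complex.ofReal_sin]
    simp only [Complex.mul_re, Complex.add_re, Complex.add_im, Complex.mul_im,
      Complex.ofReal_re, Complex.ofReal_im, Complex.I_re, Complex.I_im]
    ring
  rw [hre]
  ring

private lemma exists_close_angle (θ : Fin 10 → ℝ)
    (h1 : ∀ i, -Real.pi < θ i) (h2 : ∀ i, θ i ≤ Real.pi) :
    ∃ i j : Fin 10, i ≠ j ∧ Real.cos (Real.pi / 5) ≤ Real.cos (θ i - θ j) := by
  set g : Fin 10 → ℝ := θ ∘ Tuple.sort θ with hgdef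
  have hmono : Monotone g := Tuple.monotone_sort θ
  have hinj := (Tuple.sort θ).injective
  by_cases hgap : ∀ k : Fin 9, Real.pi / 5 < g k.succ - g k.castSucc
  · have c0 : Real.pi / 5 < g ⟨1, by norm_num⟩ - g ⟨0, by norm_num⟩ := hgap ⟨0, by norm_num⟩
    have c1 : Real.pi / 5 < g ⟨2, by norm_num⟩ - g ⟨1, by norm_num⟩ := hgap ⟨1, by norm_num⟩
    have c2 : Real.pi / 5 < g ⟨3, by norm_num⟩ - g ⟨2, by norm_num⟩ := hgap ⟨2, by norm_num⟩
    have c3 : Real.pi / 5 < g ⟨4, by norm_num⟩ - g ⟨3, by norm_num⟩ := hgap ⟨3, by norm_num⟩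
    have c4 : Real.pi / 5 < g ⟨5, by norm_num⟩ - g ⟨4, by norm_num⟩ := hgap ⟨4, by norm_num⟩
    have c5 : Real.pi / 5 < g ⟨6, by norm_num⟩ - g ⟨5, by norm_num⟩ := hgap ⟨5, by norm_num⟩
    have c6 : Real.pi / 5 < g ⟨7, by norm_num⟩ - g ⟨6, by norm_num⟩ := hgap ⟨6, by norm_num⟩
    have c7 : Real.pi / 5 < g ⟨8, by norm_num⟩ - g ⟨7, by norm_num⟩ := hgap ⟨7, by norm_num⟩
    have c8 : Real.pi / 5 < g ⟨9, by norm_num⟩ - g ⟨8, by norm_num⟩ := hgap ⟨8, by norm_num⟩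
    refine ⟨Tuple.sort θ ⟨9, by norm_num⟩, Tuple.sort θ ⟨0, by norm_num⟩,
      fun h => by simpa using hinj h, ?_⟩
    have hδeq : θ (Tuple.sort θ ⟨9, by norm_num⟩) - θ (Tuple.sort θ ⟨0, by norm_num⟩)
        = g ⟨9, by norm_num⟩ - g ⟨0, by norm_num⟩ := rfl
    set δ := g ⟨9, by norm_num⟩ - g ⟨0, by norm_num⟩ with hδ
    have hup : δ < 2 * Real.pi := by
      have := h2 (Tuple.sort θ ⟨9, by norm_num⟩)
      have := h1 (Tuple.sort θ ⟨0, by norm_num⟩)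
      simp only [hδ, hgdef, Function.comp_apply]
      linarith
    have hlow : 9 * (Real.pi / 5) < δ := by linarith
    rw [hδeq, ← Real.cos_two_pi_sub δ]
    have hpi := Real.pi_pos
    exact Real.cos_le_cos_of_nonneg_of_le_pi (by linarith) (by linarith) (by linarith)
  · push_neg at hgap
    obtain ⟨k, hk⟩ := hgap
    refine ⟨Tuple.sort θ k.succ, Tuple.sort θ k.castSucc,
      fun h => (Fin.castSucc_lt_succ (i := k)).ne' (hinj h), ?_⟩
    have h0 : 0 ≤ g k.succ - g k.castSucc := sub_nonneg.mpr (hmono (Fin.castSucc_le_succ k))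
    have hpi := Real.pi_pos
    have : θ (Tuple.sort θ k.succ) - θ (Tuple.sort θ k.castSucc) = g k.succ - g k.castSucc := rfl
    rw [this]
    exact Real.cos_le_cos_of_nonneg_of_le_pi h0 (by linarith) hk
private lemma final_contra {r s d C : ℝ} (hr : 3/4 ≤ r) (hs : 3/4 ≤ s)
    (hrd : r - 1/4 ≤ d) (hsd : s - 1/4 ≤ d) (hd1 : 1 ≤ d)
    (hC : (1 + Real.sqrt 5)/4 ≤ C)
    (hlaw : d ^ 2 = r ^ 2 + s ^ 2 - 2 * r * s * C) : False := by
  have h5 : Real.sqrt 5 ^ 2 = 5 := Real.sq_sqrt (by norm_num)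
  have h5' : (19:ℝ)/9 < Real.sqrt 5 := by nlinarith [Real.sqrt_nonneg 5]
  have hC7 : (7:ℝ)/9 < C := by linarith
  have hr2 : (r - 1/4) ^ 2 ≤ d ^ 2 := pow_le_pow_left₀ (by linarith) hrd 2
  have hs2 : (s - 1/4) ^ 2 ≤ d ^ 2 := pow_le_pow_left₀ (by linarith) hsd 2
  have hrs0 : (0:ℝ) < r * s := mul_pos (by linarith) (by linarith)
  have h2C : (14:ℝ)/9 * (r * s) < 2 * r * s * C := by
    have := mul_pos hrs0 (sub_pos.mpr hC7)
    nlinarith [this]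
  rcases le_total r s with hrs | hrs
  · have p1 : (0:ℝ) ≤ (r - 3/4) * (s - r) := mul_nonneg (by linarith) (by linarith)
    have p2 : (0:ℝ) ≤ (r - 3/4) * (s - 3/4) := mul_nonneg (by linarith) (by linarith)
    nlinarith [p1, p2, hs2, hlaw, h2C]
  · have p1 : (0:ℝ) ≤ (s - 3/4) * (r - s) := mul_nonneg (by linarith) (by linarith)
    have p2 : (0:ℝ) ≤ (s - 3/4) * (r - 3/4) := mul_nonneg (by linarith) (by linarith)
    nlinarith [p1, p2, hr2, hlaw, h2C]

/-- if `T` is a minimum spanning tree of `P` and `P'` is the set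
of points of `P` incident to at least one edge of `T` of length at least `1`,
then every closed disc of radius `1/4` contains at most `9` points of `P'`. -/
theorem few_mst_points_in_small_disc (P : Finset Point) (T : SimpleGraph ↥P)
    (hT : IsMST P T) (c : Point) :
    (P.attach.filter (fun p : ↥P =>
        dist (p : Point) c ≤ 1 / 4 ∧
        ∃ q : ↥P, T.Adj p q ∧ 1 ≤ dist (p : Point) (q : Point))).card ≤ 9 := by
  by_contra hcard
  push_neg at hcard
  set S := P.attach.filter (fun p : ↥P =>
      dist (p : Point) c ≤ 1 / 4 ∧
      ∃ q : ↥P, T.Adj p q ∧ 1 ≤ dist (p : Point) (q : Point)) with hSdef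
  obtain ⟨S', hS'sub, hS'card⟩ := Finset.exists_subset_card_eq (s := S) (n := 10) (by omega)
  have hcard10 : Fintype.card ↥S' = 10 := by rw [Fintype.card_coe, hS'card]
  obtain ⟨pt, hptinj, hmem⟩ : ∃ pt : Fin 10 → ↥P,
      Function.Injective pt ∧ ∀ i, pt i ∈ S := by
    set e := Fintype.equivFinOfCardEq hcard10 with he
    exact ⟨fun i => ((e.symm i : ↥S') : ↥P),
      fun i j h => e.symm.injective (Subtype.ext h),
      fun i => hS'sub (e.symm i).2⟩
  have hprop : ∀ i, dist ((pt i : Point)) c ≤ 1 / 4 ∧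
      ∃ q : ↥P, T.Adj (pt i) q ∧ 1 ≤ dist ((pt i : Point)) (q : Point) := by
    intro i
    have := hmem i
    rw [hSdef, Finset.mem_filter] at this
    exact this.2
  choose q hq1 hq2 using fun i => (hprop i).2
  have hdisc : ∀ i, dist ((pt i : Point)) c ≤ 1 / 4 := fun i => (hprop i).1
  have hpt_dist : ∀ i j, dist ((pt i : Point)) ((pt j : Point)) ≤ 1 / 2 := by
    intro i j
    have h := dist_triangle_right ((pt i : Point)) ((pt j : Point)) c
    have := hdisc i
    have := hdisc j
    linarith
  -- key pairwise inequality from the MST property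
  have hkey : ∀ i j, pt i ≠ pt j →
      dist ((pt i : Point)) ((q i : Point)) ≤ dist ((q i : Point)) ((q j : Point)) := by
    intro i j hne
    set Gi := T.deleteEdges {s(pt i, q i)} with hGi
    have hbr : ¬ Gi.Reachable (pt i) (q i) := by
      have hb := SimpleGraph.isAcyclic_iff_forall_adj_isBridge.mp hT.1.IsAcyclic (hq1 i)
      exact hb
    have h2 : Gi.Reachable (pt i) (pt j) := by
      by_contra hn
      have h := mst_swap hT (hq1 i) hn
      have := hq2 i
      have := hpt_dist i j
      linarith
    have h3 : s(pt j, q j) ≠ s(pt i, q i) := by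
      intro hcon
      rw [Sym2.eq_iff] at hcon
      rcases hcon with ⟨h4, h5⟩ | ⟨h4, h5⟩
      · exact hne h4.symm
      · have h6 := hq2 i
        rw [← h4] at h6
        have := hpt_dist i j
        linarith
    have h4 : Gi.Adj (pt j) (q j) :=
      SimpleGraph.deleteEdges_adj.mpr ⟨hq1 j, by simpa using h3⟩
    have h5 : ¬ Gi.Reachable (q i) (q j) := fun hr =>
      hbr (h2.trans (h4.reachable.trans hr.symm))
    exact mst_swap hT (hq1 i) h5
  -- geometry
  set z : Fin 10 → ℂ := fun i => toC ((q i : Point)) - toC c with hz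
  have hzabs : ∀ i, ‖z i‖ = dist ((q i : Point)) c :=
    fun i => (dist_toC _ _).symm
  have hr34 : ∀ i, (3:ℝ)/4 ≤ ‖z i‖ := by
    intro i
    rw [hzabs]
    have h1 := hq2 i
    have h2 := hdisc i
    have h3 := dist_triangle ((pt i : Point)) c ((q i : Point))
    have h4 := _root_.dist_comm ((q i : Point)) c
    linarith [dist_triangle ((pt i : Point)) ((q i : Point)) c,
      _root_.dist_comm c ((q i : Point))]
  have hlen_ge : ∀ i, ‖z i‖ - 1/4 ≤ dist ((pt i : Point)) ((q i : Point)) := by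
    intro i
    rw [hzabs]
    have h2 := hdisc i
    have h3 := dist_triangle ((q i : Point)) ((pt i : Point)) c
    have h4 := _root_.dist_comm ((q i : Point)) ((pt i : Point))
    linarith
  obtain ⟨i, j, hij, hcos⟩ := exists_close_angle (fun i => (z i).arg)
    (fun i => Complex.neg_pi_lt_arg _) (fun i => Complex.arg_le_pi _)
  have hptne : pt i ≠ pt j := fun h => hij (hptinj h)
  have hd1 : dist ((pt i : Point)) ((q i : Point)) ≤ dist ((q i : Point)) ((q j : Point)) :=
    hkey i j hptne
  have hd2 : dist ((pt j : Point)) ((q j : Point)) ≤ dist ((q i : Point)) ((q j : Point)) := by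
    have := hkey j i (Ne.symm hptne)
    rwa [_root_.dist_comm ((q j : Point)) ((q i : Point))] at this
  have hdeq : dist ((q i : Point)) ((q j : Point)) = ‖z i - z j‖ := by
    rw [dist_toC ((q i : Point)) ((q j : Point))]
    congr 1
    rw [hz]
    ring
  have hlaw : dist ((q i : Point)) ((q j : Point)) ^ 2
      = ‖z i‖ ^ 2 + ‖z j‖ ^ 2
        - 2 * ‖z i‖ * ‖z j‖
          * Real.cos ((z i).arg - (z j).arg) := by
    rw [hdeq]
    exact cos_law (z i) (z j)
  exact final_contra (hr34 i) (hr34 j) (le_trans (hlen_ge i) hd1)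
    (le_trans (hlen_ge j) hd2) (le_trans (hq2 i) hd1)
    (by rw [← Real.cos_pi_div_five]; exact hcos) hlaw
end
end

section
/- Let T be a minimum spanning tree of a finite point set P ⊆ ℝ² and let c ∈ ℝ². Suppose (a, p_a) and (b, p_b) are edges of T with a ≠ b, d(p_a, c) ≤ 1/4, d(p_b, c) ≤ 1/4, d(a, p_a) ≥ 1 and d(b, p_b) ≥ 1. Then the angle ∠acb at the point c between the rays ca and cb exceeds π/5. -/
open scoped Classical
noncomputable section

open SimpleGraph

lemma side_split_aux {V : Type*} (T : SimpleGraph V) (a pa : V) {v u : V} (w : T.Walk v u) :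
    (T.deleteEdges {s(a,pa)}).Reachable v u ∨
      ((T.deleteEdges {s(a,pa)}).Reachable v a ∧ (T.deleteEdges {s(a,pa)}).Reachable u pa) ∨
      ((T.deleteEdges {s(a,pa)}).Reachable v pa ∧ (T.deleteEdges {s(a,pa)}).Reachable u a) := by
  induction w with
  | nil => exact Or.inl (Reachable.refl _)
  | @cons p x q hadj _ ih =>
    by_cases he : s(p, x) = s(a, pa)
    · rw [Sym2.eq_iff] at he
      rcases he with ⟨rfl, rfl⟩ | ⟨rfl, rfl⟩
      · rcases ih with h | ⟨h1, h2⟩ | ⟨h1, h2⟩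
        · exact Or.inr (Or.inl ⟨Reachable.refl _, h.symm⟩)
        · exact Or.inr (Or.inl ⟨Reachable.refl _, h2⟩)
        · exact Or.inl h2.symm
      · rcases ih with h | ⟨h1, h2⟩ | ⟨h1, h2⟩
        · exact Or.inr (Or.inr ⟨Reachable.refl _, h.symm⟩)
        · exact Or.inl h2.symm
        · exact Or.inr (Or.inr ⟨Reachable.refl _, h2⟩)
    · have hadj' : (T.deleteEdges {s(a,pa)}).Adj p x := by
        rw [deleteEdges_adj]
        exact ⟨hadj, by simpa using he⟩
      rcases ih with h | ⟨h1, h2⟩ | ⟨h1, h2⟩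
      · exact Or.inl (hadj'.reachable.trans h)
      · exact Or.inr (Or.inl ⟨hadj'.reachable.trans h1, h2⟩)
      · exact Or.inr (Or.inr ⟨hadj'.reachable.trans h1, h2⟩)

lemma side_split {V : Type*} (T : SimpleGraph V) (a pa : V) (v : V) (w : T.Walk v a) :
    (T.deleteEdges {s(a,pa)}).Reachable v a ∨ (T.deleteEdges {s(a,pa)}).Reachable v pa := by
  rcases side_split_aux T a pa w with h | ⟨h1, _⟩ | ⟨h1, _⟩
  · exact Or.inl h
  · exact Or.inl h1
  · exact Or.inr h1

lemma tree_not_reachable_delete {V : Type*} {T : SimpleGraph V} (hT : T.IsAcyclic)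
    {a pa : V} (hadj : T.Adj a pa) :
    ¬ (T.deleteEdges {s(a,pa)}).Reachable a pa := by
  have hbr := isAcyclic_iff_forall_adj_isBridge.mp hT hadj
  rw [isBridge_iff] at hbr
  exact hbr

lemma pair_sum (P : Finset Point) (u v : ↥P) (huv : u ≠ v) :
    ∑ p ∈ P.attach, ∑ q ∈ P.attach,
      (if (p = u ∧ q = v) ∨ (p = v ∧ q = u) then dist (p : Point) (q : Point) else 0)
      = 2 * dist (u : Point) (v : Point) := by
  have hsplit : ∀ p q : ↥P,
      (if (p = u ∧ q = v) ∨ (p = v ∧ q = u) then dist (p : Point) (q : Point) else 0)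
      = (if p = u ∧ q = v then dist (p : Point) (q : Point) else 0)
        + (if p = v ∧ q = u then dist (p : Point) (q : Point) else 0) := by
    intro p q
    by_cases h1 : p = u ∧ q = v
    · have h2 : ¬ (p = v ∧ q = u) := by
        rintro ⟨rfl, rfl⟩; exact huv h1.2
      rw [if_pos (Or.inl h1), if_pos h1, if_neg h2, add_zero]
    · by_cases h2 : p = v ∧ q = u
      · rw [if_pos (Or.inr h2), if_neg h1, if_pos h2, zero_add]
      · rw [if_neg (by tauto), if_neg h1, if_neg h2, add_zero]
  have hone : ∀ u' v' : ↥P, ∑ p ∈ P.attach, ∑ q ∈ P.attach,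
      (if p = u' ∧ q = v' then dist (p : Point) (q : Point) else 0)
      = dist (u' : Point) (v' : Point) := by
    intro u' v'
    have hinner : ∀ p : ↥P, ∑ q ∈ P.attach,
        (if p = u' ∧ q = v' then dist (p : Point) (q : Point) else 0)
        = if p = u' then dist (p : Point) (v' : Point) else 0 := by
      intro p
      by_cases hp : p = u'
      · rw [if_pos hp]
        simp only [hp, true_and]
        rw [Finset.sum_eq_single v' (fun b _ hb => if_neg hb)
          (fun h => absurd (Finset.mem_attach _ _) h)]
        simp
      · simp [hp]
    rw [Finset.sum_congr rfl (fun p _ => hinner p)]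
    rw [Finset.sum_eq_single u' (fun b _ hb => if_neg hb)
      (fun h => absurd (Finset.mem_attach _ _) h)]
    simp
  calc ∑ p ∈ P.attach, ∑ q ∈ P.attach,
      (if (p = u ∧ q = v) ∨ (p = v ∧ q = u) then dist (p : Point) (q : Point) else 0)
      = ∑ p ∈ P.attach, ∑ q ∈ P.attach,
        ((if p = u ∧ q = v then dist (p : Point) (q : Point) else 0)
          + (if p = v ∧ q = u then dist (p : Point) (q : Point) else 0)) := by
        refine Finset.sum_congr rfl fun p _ => Finset.sum_congr rfl fun q _ => hsplit p q
    _ = dist (u : Point) (v : Point) + dist (v : Point) (u : Point) := by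
        rw [← hone u v, ← hone v u, ← Finset.sum_add_distrib]
        refine Finset.sum_congr rfl fun p _ => ?_
        rw [← Finset.sum_add_distrib]
    _ = 2 * dist (u : Point) (v : Point) := by rw [dist_comm (v : Point)]; ring

lemma mst_exchange (P : Finset Point) (T : SimpleGraph ↥P) (hT : IsMST P T)
    {a pa x y : ↥P} (hadj : T.Adj a pa) (hxy : x ≠ y)
    (hx : (T.deleteEdges {s(a,pa)}).Reachable x a)
    (hy : (T.deleteEdges {s(a,pa)}).Reachable y pa)
    (hlt : dist (x : Point) (y : Point) < dist (a : Point) (pa : Point)) : False := by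
  set G := T.deleteEdges {s(a,pa)} with hG
  have hGT : G ≤ T := SimpleGraph.deleteEdges_le _
  have hnr : ¬ G.Reachable a pa := tree_not_reachable_delete hT.1.2 hadj
  have hfe : s(x,y) ≠ s(a,pa) := by
    intro h
    rw [Sym2.eq_iff] at h
    rcases h with ⟨rfl, rfl⟩ | ⟨rfl, rfl⟩
    · exact absurd hlt (lt_irrefl _)
    · have := dist_comm (x : Point) (y : Point); linarith
  have hnrxy : ¬ G.Reachable x y := fun h => hnr (hx.symm.trans (h.trans hy))
  have hnTxy : ¬ T.Adj x y := by
    intro h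
    exact hnrxy (SimpleGraph.Adj.reachable (by rw [hG, deleteEdges_adj]; exact ⟨h, by simpa using hfe⟩))
  set T' : SimpleGraph ↥P := G ⊔ SimpleGraph.fromEdgeSet {s(x,y)} with hT'
  have hGT' : G ≤ T' := le_sup_left
  have hT'xy : T'.Adj x y := Or.inr (by rw [fromEdgeSet_adj]; exact ⟨rfl, hxy⟩)
  have hT'adj : ∀ p q : ↥P, T'.Adj p q ↔
      (T.Adj p q ∧ s(p,q) ≠ s(a,pa)) ∨ (s(p,q) = s(x,y) ∧ p ≠ q) := by
    intro p q
    rw [hT', sup_adj, fromEdgeSet_adj, hG, deleteEdges_adj]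
    simp
  -- connectivity
  have hkey : ∀ v : ↥P, T'.Reachable v a := by
    intro v
    obtain ⟨w⟩ := hT.1.1.preconnected v a
    rcases side_split T a pa v w with h | h
    · exact h.mono hGT'
    · exact (((h.mono hGT').trans (hy.mono hGT').symm).trans hT'xy.symm.reachable).trans
        (hx.mono hGT')
  have hconn : T'.Connected := by
    rw [SimpleGraph.connected_iff]
    exact ⟨fun u v => (hkey u).trans (hkey v).symm, ⟨a⟩⟩
  -- acyclicity
  have hbridge : T'.IsBridge s(x,y) := by
    rw [SimpleGraph.isBridge_iff]
    refine fun hr => hnrxy (hr.mono ?_)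
    intro u v huv
    rcases huv with ⟨h1 | h1, h2⟩
    · exact h1
    · exact absurd h1 h2
  have hacyc : T'.IsAcyclic := by
    intro v c hc
    by_cases hf : s(x,y) ∈ c.edges
    · exact (SimpleGraph.isBridge_iff_adj_and_forall_cycle_notMem hT'xy).mp hbridge c hc hf
    · have hsub : ∀ e ∈ c.edges, e ∈ T.edgeSet := by
        intro e he
        have h1 : e ∈ T'.edgeSet := c.edges_subset_edgeSet he
        rw [hT', SimpleGraph.edgeSet_sup] at h1
        rcases h1 with h1 | h1
        · exact SimpleGraph.edgeSet_mono hGT h1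
        · rw [SimpleGraph.edgeSet_fromEdgeSet] at h1
          exact absurd (h1.1 ▸ he) hf
      exact hT.1.2 (c.transfer T hsub) (hc.transfer hsub)
  have htree : T'.IsTree := ⟨hconn, hacyc⟩
  clear_value T'
  -- weight
  have hpapb : a ≠ pa := hadj.ne
  have hpt : ∀ p q : ↥P, (if T'.Adj p q then dist (p : Point) (q : Point) else 0)
      = (if T.Adj p q then dist (p : Point) (q : Point) else 0)
        + (if (p = x ∧ q = y) ∨ (p = y ∧ q = x) then dist (p : Point) (q : Point) else 0)
        - (if (p = a ∧ q = pa) ∨ (p = pa ∧ q = a) then dist (p : Point) (q : Point) else 0) := by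
    intro p q
    by_cases h1 : (p = a ∧ q = pa) ∨ (p = pa ∧ q = a)
    · have hpq : s(p,q) = s(a,pa) := Sym2.eq_iff.mpr h1
      have hTadj : T.Adj p q := by
        rcases h1 with ⟨rfl, rfl⟩ | ⟨rfl, rfl⟩
        · exact hadj
        · exact hadj.symm
      have hnT' : ¬ T'.Adj p q := by
        rw [hT'adj]
        rintro (⟨_, h⟩ | ⟨h, _⟩)
        · exact h hpq
        · exact hfe (h ▸ hpq)
      have h2 : ¬ ((p = x ∧ q = y) ∨ (p = y ∧ q = x)) := by
        intro h2
        exact hfe ((Sym2.eq_iff.mpr h2) ▸ hpq)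
      rw [if_neg hnT', if_pos hTadj, if_neg h2, if_pos h1]; ring
    · by_cases h2 : (p = x ∧ q = y) ∨ (p = y ∧ q = x)
      · have hpq : s(p,q) = s(x,y) := Sym2.eq_iff.mpr h2
        have hne : p ≠ q := by
          rcases h2 with ⟨rfl, rfl⟩ | ⟨rfl, rfl⟩
          · exact hxy
          · exact hxy.symm
        have hadj' : T'.Adj p q := (hT'adj p q).mpr (Or.inr ⟨hpq, hne⟩)
        have hnT : ¬ T.Adj p q := by
          rcases h2 with ⟨rfl, rfl⟩ | ⟨rfl, rfl⟩
          · exact hnTxy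
          · exact fun h => hnTxy h.symm
        rw [if_pos hadj', if_neg hnT, if_pos h2, if_neg h1]; ring
      · have hiff : T'.Adj p q ↔ T.Adj p q := by
          rw [hT'adj]
          constructor
          · rintro (⟨h, _⟩ | ⟨hpq, _⟩)
            · exact h
            · exact absurd (Sym2.eq_iff.mp hpq) h2
          · intro h
            exact Or.inl ⟨h, fun hpq => h1 (Sym2.eq_iff.mp hpq)⟩
        rw [if_neg h1, if_neg h2, sub_zero, add_zero]
        simp only [hiff]
  have hw : treeWeight P T' = treeWeight P T
      + dist (x : Point) (y : Point) - dist (a : Point) (pa : Point) := by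
    unfold treeWeight
    have : ∑ p ∈ P.attach, ∑ q ∈ P.attach,
        (if T'.Adj p q then dist (p : Point) (q : Point) else 0)
        = (∑ p ∈ P.attach, ∑ q ∈ P.attach,
            (if T.Adj p q then dist (p : Point) (q : Point) else 0))
          + 2 * dist (x : Point) (y : Point) - 2 * dist (a : Point) (pa : Point) := by
      rw [← pair_sum P x y hxy, ← pair_sum P a pa hpapb]
      rw [← Finset.sum_add_distrib, ← Finset.sum_sub_distrib]
      refine Finset.sum_congr rfl fun p _ => ?_
      rw [← Finset.sum_add_distrib, ← Finset.sum_sub_distrib]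
      exact Finset.sum_congr rfl fun q _ => hpt p q
    rw [this]; ring
  have := hT.2 T' htree
  rw [hw] at this
  linarith

lemma geom_ineq {r s M C : ℝ} (hr : 3/4 ≤ r) (hs : 3/4 ≤ s) (hM1 : 1 ≤ M)
    (hrM : r ≤ M + 1/4) (hsM : s ≤ M + 1/4) (hC : 4/5 ≤ C) :
    r^2 + s^2 - 2*r*s*C < M^2 := by
  have hrs : (0:ℝ) ≤ r * s := mul_nonneg (by linarith) (by linarith)
  have h1 : r^2 + s^2 - 2*r*s*C ≤ r^2 + s^2 - (8/5)*(r*s) := by nlinarith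
  have h2 : r^2 + s^2 - (8/5)*(r*s) < M^2 := by
    nlinarith [mul_nonneg (by linarith : (0:ℝ) ≤ M + 1/4 - r) (by linarith : (0:ℝ) ≤ M + 1/4 - s),
      mul_nonneg (by linarith : (0:ℝ) ≤ r - 3/4) (by linarith : (0:ℝ) ≤ s - 3/4),
      mul_nonneg (by linarith : (0:ℝ) ≤ M + 1/4 - r) (by linarith : (0:ℝ) ≤ s - 3/4),
      mul_nonneg (by linarith : (0:ℝ) ≤ M + 1/4 - s) (by linarith : (0:ℝ) ≤ r - 3/4),
      sq_nonneg (r - s), mul_nonneg (by linarith : (0:ℝ) ≤ M - 1) (by linarith : (0:ℝ) ≤ r - 3/4),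
      mul_nonneg (by linarith : (0:ℝ) ≤ M - 1) (by linarith : (0:ℝ) ≤ s - 3/4),
      sq_nonneg (M - 1)]
  linarith

open EuclideanGeometry in
lemma aux_main (P : Finset Point) (T : SimpleGraph ↥P)
    (hT : IsMST P T) (c : Point) (a b pa pb : ↥P) (hab : a ≠ b)
    (ha : T.Adj a pa) (hb : T.Adj b pb)
    (hpa : dist (pa : Point) c ≤ 1 / 4) (hpb : dist (pb : Point) c ≤ 1 / 4)
    (hla : 1 ≤ dist (a : Point) (pa : Point))
    (hlb : 1 ≤ dist (b : Point) (pb : Point))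
    (hord : dist (b : Point) (pb : Point) ≤ dist (a : Point) (pa : Point))
    (hang : ∠ (a : Point) c (b : Point) ≤ Real.pi / 5) : False := by
  have hba' : b ≠ pa := by
    intro h
    have hbc : dist (b : Point) c ≤ 1/4 := by rw [h]; exact hpa
    linarith [dist_triangle (b : Point) c (pb : Point), dist_comm c (pb : Point)]
  by_cases hr : (T.deleteEdges {s(a,pa)}).Reachable b a
  · -- add edge (pb, pa)
    have hGb : (T.deleteEdges {s(a,pa)}).Adj b pb := by
      rw [SimpleGraph.deleteEdges_adj]
      refine ⟨hb, ?_⟩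
      simp only [Set.mem_singleton_iff, Sym2.eq_iff]
      rintro (⟨h1, h2⟩ | ⟨h1, h2⟩)
      · exact hab h1.symm
      · exact hba' h1
    have hx : (T.deleteEdges {s(a,pa)}).Reachable pb a := hGb.symm.reachable.trans hr
    have hnr := tree_not_reachable_delete hT.1.2 ha
    have hne : pb ≠ pa := fun h => hnr (h ▸ hx).symm
    refine mst_exchange P T hT ha hne hx (SimpleGraph.Reachable.refl pa) ?_
    have := dist_triangle (pb : Point) c (pa : Point)
    have := dist_comm c (pa : Point)
    linarith
  · -- add edge (a, b)
    obtain ⟨w⟩ := hT.1.1.preconnected b a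
    have hyb : (T.deleteEdges {s(a,pa)}).Reachable b pa := (side_split T a pa b w).resolve_left hr
    have hr3 : 3/4 ≤ dist (a : Point) c := by
      linarith [dist_triangle (a : Point) c (pa : Point), dist_comm c (pa : Point)]
    have hs3 : 3/4 ≤ dist (b : Point) c := by
      linarith [dist_triangle (b : Point) c (pb : Point), dist_comm c (pb : Point)]
    have hrM : dist (a : Point) c ≤ dist (a : Point) (pa : Point) + 1/4 := by
      linarith [dist_triangle (a : Point) (pa : Point) c]
    have hsM : dist (b : Point) c ≤ dist (a : Point) (pa : Point) + 1/4 := by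
      linarith [dist_triangle (b : Point) (pb : Point) c]
    have hcos : 4/5 ≤ Real.cos (∠ (a : Point) c (b : Point)) := by
      have h1 : Real.cos (Real.pi/5) ≤ Real.cos (∠ (a : Point) c (b : Point)) :=
        Real.cos_le_cos_of_nonneg_of_le_pi (angle_nonneg _ _ _)
          (by linarith [Real.pi_pos]) hang
      rw [Real.cos_pi_div_five] at h1
      have h5 : (11/5 : ℝ) ≤ Real.sqrt 5 := by
        nlinarith [Real.sq_sqrt (show (0:ℝ) ≤ 5 by norm_num), Real.sqrt_nonneg 5]
      linarith
    have hQ : dist (a : Point) (b : Point) ^ 2 < dist (a : Point) (pa : Point) ^ 2 := by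
      have law := law_cos (a : Point) c (b : Point)
      have G := geom_ineq hr3 hs3 hla hrM hsM hcos
      nlinarith [law, G]
    have hltab : dist (a : Point) (b : Point) < dist (a : Point) (pa : Point) :=
      lt_of_pow_lt_pow_left₀ 2 dist_nonneg hQ
    exact mst_exchange P T hT ha hab (SimpleGraph.Reachable.refl a) hyb hltab

open EuclideanGeometry in
/-- if `(a, pₐ)` and `(b, p_b)` are edges of a minimum spanning
tree with `a ≠ b`, both edges of length at least `1`, and `pₐ`, `p_b` within
distance `1/4` of a point `c`, then the angle `∠ a c b` exceeds `π/5`. -/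
theorem large_angle_at_disc_center (P : Finset Point) (T : SimpleGraph ↥P)
    (hT : IsMST P T) (c : Point) (a b pa pb : ↥P) (hab : a ≠ b)
    (ha : T.Adj a pa) (hb : T.Adj b pb)
    (hpa : dist (pa : Point) c ≤ 1 / 4) (hpb : dist (pb : Point) c ≤ 1 / 4)
    (hla : 1 ≤ dist (a : Point) (pa : Point))
    (hlb : 1 ≤ dist (b : Point) (pb : Point)) :
    Real.pi / 5 < ∠ (a : Point) c (b : Point) := by
  by_contra h
  push_neg at h
  rcases le_total (dist (b : Point) (pb : Point)) (dist (a : Point) (pa : Point)) with ho | ho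
  · exact aux_main P T hT c a b pa pb hab ha hb hpa hpb hla hlb ho h
  · exact aux_main P T hT c b a pb pa hab.symm hb ha hpb hpa hlb hla ho
      (by rw [angle_comm]; exact h)
end
end

section
/- Let x₀ = 0, x₁ = 1, and x_i = 2·x_{i−1}² for i ≥ 2, regarded as n collinear points in ℝ². Then for any two disjoint pairs {x_i, x_j} and {x_k, x_m} of these points and any symmetric power assignment (one positive power per pair, used in both directions), the two pairs are not simultaneously bidirectionally feasible: at least one of the four SINR constraints fails. Consequently, any set of pairs whose links strongly connect these n points requires at least n − 1 slots in the symmetric bidirectional model. -/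
open scoped Classical
noncomputable section

/-- A bidirectional pair `{u,v}` is represented by an ordered pair `l = (u,v)`;
its two constituent links are `l₁ = (u,v)` and `l₂ = (v,u)`, with powers
`(Pw l).1` and `(Pw l).2`. `BidiFeasibleWith α β L Pw` states that both SINR
constraints of every pair of `L` hold, interference being summed over both
directions of all other pairs (the two links of one pair do not interfere
with each other). -/
def BidiFeasibleWith (α β : ℝ) (L : Finset Link) (Pw : Link → ℝ × ℝ) : Prop :=
  ∀ l ∈ L,
    (β * ∑ l' ∈ L.erase l,
        ((Pw l').1 / dist l'.1 l.2 ^ α + (Pw l').2 / dist l'.2 l.2 ^ α)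
      ≤ (Pw l).1 / linkLen l ^ α) ∧
    (β * ∑ l' ∈ L.erase l,
        ((Pw l').1 / dist l'.1 l.1 ^ α + (Pw l').2 / dist l'.2 l.1 ^ α)
      ≤ (Pw l).2 / linkLen l ^ α)

/-- Bidirectional feasibility in the asymmetric model: the two directions of a
pair may use different (positive) powers. -/
def BidiFeasible (α β : ℝ) (L : Finset Link) : Prop :=
  ∃ Pw : Link → ℝ × ℝ, (∀ l ∈ L, 0 < (Pw l).1 ∧ 0 < (Pw l).2) ∧
    BidiFeasibleWith α β L Pw

/-- Bidirectional feasibility in the symmetric model: the two directions of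
each pair must use the same (positive) power. -/
def SymBidiFeasible (α β : ℝ) (L : Finset Link) : Prop :=
  ∃ Pw : Link → ℝ × ℝ, (∀ l ∈ L, 0 < (Pw l).1 ∧ (Pw l).1 = (Pw l).2) ∧
    BidiFeasibleWith α β L Pw

/-- The point `(r, 0)` on the x-axis of the Euclidean plane. -/
def ptOnLine (r : ℝ) : Point := (EuclideanSpace.equiv (Fin 2) ℝ).symm ![r, 0]
lemma dist_ptOnLine (r s : ℝ) : dist (ptOnLine r) (ptOnLine s) = |r - s| := by
  simp [ptOnLine, EuclideanSpace.dist_eq, Fin.sum_univ_two, Real.dist_eq, Real.sqrt_sq_eq_abs]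

section XSeq
variable (x : ℕ → ℝ) (h0 : x 0 = 0) (h1 : x 1 = 1)
  (hrec : ∀ i, 2 ≤ i → x i = 2 * x (i - 1) ^ 2)

include h0 h1 hrec

lemma xstep : ∀ p, 1 ≤ x (p + 1) ∧ x p + 1 ≤ x (p + 1) := by
  intro p
  induction p with
  | zero => constructor <;> simp [h0, h1]
  | succ p ih =>
    have e : x (p + 2) = 2 * x (p + 1) ^ 2 := by
      have := hrec (p + 2) (by omega)
      simpa using this
    constructor <;> nlinarith [ih.1, ih.2]

lemma xgap_lt : ∀ p q, p < q → x p + 1 ≤ x q := by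
  intro p q h
  induction q with
  | zero => omega
  | succ q ih =>
    rcases Nat.lt_succ_iff_lt_or_eq.mp h with h' | h'
    · have := (xstep x h0 h1 hrec q).2
      have := ih h'
      linarith
    · subst h'; exact (xstep x h0 h1 hrec p).2

lemma xmono_le : ∀ p q, p ≤ q → x p ≤ x q := by
  intro p q h
  rcases eq_or_lt_of_le h with h' | h'
  · rw [h']
  · linarith [xgap_lt x h0 h1 hrec p q h']

lemma xnonneg : ∀ p, 0 ≤ x p := by
  intro p
  cases p with
  | zero => simp [h0]
  | succ p => have := xgap_lt x h0 h1 hrec 0 (p+1) (by omega); simp [h0] at this; linarith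

lemma xgap_abs (p q : ℕ) (h : p ≠ q) : 1 ≤ |x p - x q| := by
  rcases h.lt_or_gt with h' | h'
  · rw [abs_sub_comm, abs_of_nonneg (by linarith [xgap_lt x h0 h1 hrec p q h'])]
    linarith [xgap_lt x h0 h1 hrec p q h']
  · rw [abs_of_nonneg (by linarith [xgap_lt x h0 h1 hrec q p h'])]
    linarith [xgap_lt x h0 h1 hrec q p h']

lemma xne (p q : ℕ) (h : p ≠ q) : x p ≠ x q := by
  have h2 := xgap_abs x h0 h1 hrec p q h
  intro he
  rw [he] at h2
  simp at h2
  linarith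

lemma ptne (p q : ℕ) (h : p ≠ q) : ptOnLine (x p) ≠ ptOnLine (x q) := by
  intro he
  have hd : dist (ptOnLine (x p)) (ptOnLine (x q)) = 0 := by rw [he]; simp
  rw [dist_ptOnLine] at hd
  have := xgap_abs x h0 h1 hrec p q h
  linarith

lemma pt_inj (p q : ℕ) (h : ptOnLine (x p) = ptOnLine (x q)) : p = q := by
  by_contra hne
  exact ptne x h0 h1 hrec p q hne h

lemma x2val : x 2 = 2 := by
  have := hrec 2 (by omega)
  simp [h1] at this
  linarith

end XSeq

lemma strip_beta (β t R : ℝ) (hβ : 1 ≤ β) (ht : 0 ≤ t) (h : β * t ≤ R) : t ≤ R :=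
  le_trans (le_mul_of_one_le_left ht hβ) h

lemma lt_of_interf (P Q D E : ℝ) (hQ : 0 < Q) (hD : 0 < D) (hE : 0 < E)
    (h : Q / D + Q / E ≤ P / D) : Q < P := by
  have h1 : 0 < Q / E := div_pos hQ hE
  have h2 : Q / D < P / D := by linarith
  by_contra hle
  push_neg at hle
  have h3 : P / D ≤ Q / D := by gcongr
  linarith

lemma core (α P Q dA dB dC : ℝ) (hα : 0 < α) (hP : 0 < P) (hQ : 0 < Q)
    (hA : 0 < dA) (hB : 0 < dB) (hC : 0 < dC)
    (hd1 : Q / dC ^ α ≤ P / dA ^ α) (hd2 : P / dC ^ α ≤ Q / dB ^ α)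
    (hgeo : dC * dC < dA * dB) : False := by
  have pA : 0 < dA ^ α := Real.rpow_pos_of_pos hA α
  have pB : 0 < dB ^ α := Real.rpow_pos_of_pos hB α
  have pC : 0 < dC ^ α := Real.rpow_pos_of_pos hC α
  have m1 : Q * dA ^ α ≤ P * dC ^ α := (div_le_div_iff₀ pC pA).mp hd1
  have m2 : P * dB ^ α ≤ Q * dC ^ α := (div_le_div_iff₀ pC pB).mp hd2
  have m3 : (Q * dA ^ α) * (P * dB ^ α) ≤ (P * dC ^ α) * (Q * dC ^ α) :=
    mul_le_mul m1 m2 (by positivity) (by positivity)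
  have m4 : dA ^ α * dB ^ α ≤ dC ^ α * dC ^ α := by
    nlinarith [mul_pos hP hQ]
  rw [← Real.mul_rpow hA.le hB.le, ← Real.mul_rpow hC.le hC.le] at m4
  have m6 : (dC * dC) ^ α < (dA * dB) ^ α :=
    Real.rpow_lt_rpow (by positivity) hgeo hα
  linarith

/-- Extract the four SINR constraints for a two-pair link set. -/
lemma pair_constraints (α β : ℝ) (l l' : Link) (hne : l ≠ l')
    (h : SymBidiFeasible α β {l, l'}) :
    ∃ P Q : ℝ, 0 < P ∧ 0 < Q ∧
      (β * (Q / dist l'.1 l.2 ^ α + Q / dist l'.2 l.2 ^ α) ≤ P / dist l.1 l.2 ^ α) ∧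
      (β * (Q / dist l'.1 l.1 ^ α + Q / dist l'.2 l.1 ^ α) ≤ P / dist l.1 l.2 ^ α) ∧
      (β * (P / dist l.1 l'.2 ^ α + P / dist l.2 l'.2 ^ α) ≤ Q / dist l'.1 l'.2 ^ α) ∧
      (β * (P / dist l.1 l'.1 ^ α + P / dist l.2 l'.1 ^ α) ≤ Q / dist l'.1 l'.2 ^ α) := by
  obtain ⟨Pw, hpos, hfeas⟩ := h
  have hl : l ∈ ({l, l'} : Finset Link) := Finset.mem_insert_self _ _
  have hl' : l' ∈ ({l, l'} : Finset Link) :=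
    Finset.mem_insert_of_mem (Finset.mem_singleton_self _)
  have e1 : ({l, l'} : Finset Link).erase l = {l'} :=
    Finset.erase_insert (by simpa using hne)
  have e2 : ({l, l'} : Finset Link).erase l' = {l} := by
    rw [Finset.pair_comm]
    exact Finset.erase_insert (by simpa using hne.symm)
  obtain ⟨hc1, hc2⟩ := hfeas l hl
  obtain ⟨hc3, hc4⟩ := hfeas l' hl'
  rw [e1, Finset.sum_singleton] at hc1 hc2
  rw [e2, Finset.sum_singleton] at hc3 hc4
  have hsl := (hpos l hl).2
  have hsl' := (hpos l' hl').2
  simp only [linkLen] at hc1 hc2 hc3 hc4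
  rw [← hsl] at hc2 hc3 hc4
  rw [← hsl'] at hc1 hc2 hc4
  exact ⟨(Pw l).1, (Pw l').1, (hpos l hl).1, (hpos l' hl').1, hc1, hc2, hc3, hc4⟩

/-- The core geometric case: `u` belongs to the longest pair. -/
lemma case_max (α β S u v w z P Q : ℝ) (hα : 2 < α) (hβ : 1 ≤ β)
    (hP : 0 < P) (hQ : 0 < Q)
    (hvw : v ≠ w) (hwz : w ≠ z) (huv : u ≠ v)
    (hvwS : |v - w| ≤ S)
    (hbig : S * S < |u - v| * |w - z|)
    (C1 : β * (Q / |w - v| ^ α + Q / |z - v| ^ α) ≤ P / |u - v| ^ α)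
    (C4 : β * (P / |u - w| ^ α + P / |v - w| ^ α) ≤ Q / |w - z| ^ α) : False := by
  have habs : ∀ a b : ℝ, (0:ℝ) ≤ |a - b| := fun a b => abs_nonneg _
  have t1 : (0:ℝ) ≤ Q / |w - v| ^ α := div_nonneg hQ.le (Real.rpow_nonneg (habs _ _) _)
  have t2 : (0:ℝ) ≤ Q / |z - v| ^ α := div_nonneg hQ.le (Real.rpow_nonneg (habs _ _) _)
  have t3 : (0:ℝ) ≤ P / |u - w| ^ α := div_nonneg hP.le (Real.rpow_nonneg (habs _ _) _)
  have t4 : (0:ℝ) ≤ P / |v - w| ^ α := div_nonneg hP.le (Real.rpow_nonneg (habs _ _) _)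
  have s1 := strip_beta β _ _ hβ (by linarith) C1
  have s4 := strip_beta β _ _ hβ (by linarith) C4
  have hd1 : Q / |w - v| ^ α ≤ P / |u - v| ^ α := by linarith
  have hd2 : P / |v - w| ^ α ≤ Q / |w - z| ^ α := by linarith
  rw [abs_sub_comm w v] at hd1
  have hCpos : 0 < |v - w| := abs_pos.mpr (sub_ne_zero.mpr hvw)
  have hApos : 0 < |u - v| := abs_pos.mpr (sub_ne_zero.mpr huv)
  have hBpos : 0 < |w - z| := abs_pos.mpr (sub_ne_zero.mpr hwz)
  exact core α P Q (|u - v|) (|w - z|) (|v - w|) (by linarith) hP hQ hApos hBpos hCpos hd1 hd2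
    (lt_of_le_of_lt (by nlinarith) hbig)

lemma hbig_aux (x : ℕ → ℝ) (h0 : x 0 = 0) (h1 : x 1 = 1)
    (hrec : ∀ i, 2 ≤ i → x i = 2 * x (i - 1) ^ 2)
    (a b c d t : ℕ) (h2t : 2 ≤ t) (hb : b ≤ t) (hta : t < a) (hcd : c ≠ d) :
    x t * x t < |x a - x b| * |x c - x d| := by
  have hS2 : 2 ≤ x t := by
    have := xmono_le x h0 h1 hrec 2 t h2t
    rw [x2val x h0 h1 hrec] at this
    linarith
  have hxa : 2 * x t ^ 2 ≤ x a := by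
    have hmle : x (t + 1) ≤ x a := xmono_le x h0 h1 hrec (t + 1) a (by omega)
    have he : x (t + 1) = 2 * x t ^ 2 := by
      have := hrec (t + 1) (by omega)
      simpa using this
    linarith
  have hxb : x b ≤ x t := xmono_le x h0 h1 hrec b t hb
  have hab : 2 * x t ^ 2 - x t ≤ |x a - x b| := by
    have := le_abs_self (x a - x b)
    linarith
  have hcd1 : 1 ≤ |x c - x d| := xgap_abs x h0 h1 hrec c d hcd
  have habn : (0:ℝ) ≤ |x a - x b| := abs_nonneg _
  nlinarith

lemma two_pairs_infeasible (α β : ℝ) (hα : 2 < α) (hβ : 1 ≤ β) (x : ℕ → ℝ)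
    (h0 : x 0 = 0) (h1 : x 1 = 1) (hrec : ∀ i, 2 ≤ i → x i = 2 * x (i - 1) ^ 2)
    (i j k m : ℕ) (hij : i ≠ j) (hkm : k ≠ m) (hik : i ≠ k) (him : i ≠ m)
    (hjk : j ≠ k) (hjm : j ≠ m) :
    ¬SymBidiFeasible α β
      {(ptOnLine (x i), ptOnLine (x j)), (ptOnLine (x k), ptOnLine (x m))} := by
  intro h
  have hne : ((ptOnLine (x i), ptOnLine (x j)) : Link) ≠ (ptOnLine (x k), ptOnLine (x m)) := by
    intro he
    exact ptne x h0 h1 hrec i k hik (congrArg Prod.fst he)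
  obtain ⟨P, Q, hP, hQ, C1, C2, C3, C4⟩ := pair_constraints α β _ _ hne h
  simp only [dist_ptOnLine] at C1 C2 C3 C4
  have hMle : ∀ p q t : ℕ, p ≤ t → q ≤ t → |x p - x q| ≤ x t := by
    intro p q t hp hq
    have n1 := xnonneg x h0 h1 hrec p
    have n2 := xnonneg x h0 h1 hrec q
    have m1 := xmono_le x h0 h1 hrec p t hp
    have m2 := xmono_le x h0 h1 hrec q t hq
    rw [abs_le]; constructor <;> linarith
  have hxne := xne x h0 h1 hrec
  have hcases : (j < i ∧ k < i ∧ m < i) ∨ (i < j ∧ k < j ∧ m < j) ∨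
      (i < k ∧ j < k ∧ m < k) ∨ (i < m ∧ j < m ∧ k < m) := by omega
  rcases hcases with ⟨ha1, ha2, ha3⟩ | ⟨ha1, ha2, ha3⟩ | ⟨ha1, ha2, ha3⟩ | ⟨ha1, ha2, ha3⟩
  · -- i is the maximum
    set t := max j (max k m) with ht_def
    have hjt : j ≤ t := le_max_left _ _
    have hkt : k ≤ t := le_trans (le_max_left _ _) (le_max_right _ _)
    have hmt : m ≤ t := le_trans (le_max_right _ _) (le_max_right _ _)
    have hch : t = j ∨ t = k ∨ t = m := by
      rcases max_choice j (max k m) with h' | h'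
      · exact Or.inl h'
      · rcases max_choice k m with h'' | h'' <;> rw [ht_def, h'] <;> [exact Or.inr (Or.inl h''); exact Or.inr (Or.inr h'')]
    have h2t : 2 ≤ t := by omega
    have hti : t < i := by omega
    exact case_max α β (x t) (x i) (x j) (x k) (x m) P Q hα hβ hP hQ
      (hxne j k hjk) (hxne k m hkm) (hxne i j hij)
      (hMle j k t hjt hkt)
      (hbig_aux x h0 h1 hrec i j k m t h2t hjt hti hkm) C1 C4
  · -- j is the maximum
    set t := max i (max k m) with ht_def
    have hit : i ≤ t := le_max_left _ _
    have hkt : k ≤ t := le_trans (le_max_left _ _) (le_max_right _ _)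
    have hmt : m ≤ t := le_trans (le_max_right _ _) (le_max_right _ _)
    have hch : t = i ∨ t = k ∨ t = m := by
      rcases max_choice i (max k m) with h' | h'
      · exact Or.inl h'
      · rcases max_choice k m with h'' | h'' <;> rw [ht_def, h'] <;> [exact Or.inr (Or.inl h''); exact Or.inr (Or.inr h'')]
    have h2t : 2 ≤ t := by omega
    have htj : t < j := by omega
    rw [abs_sub_comm (x i) (x j)] at C2
    rw [add_comm (P / |x i - x k| ^ α)] at C4
    exact case_max α β (x t) (x j) (x i) (x k) (x m) P Q hα hβ hP hQ
      (hxne i k hik) (hxne k m hkm) (hxne j i hij.symm)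
      (hMle i k t hit hkt)
      (hbig_aux x h0 h1 hrec j i k m t h2t hit htj hkm) C2 C4
  · -- k is the maximum
    set t := max i (max j m) with ht_def
    have hit : i ≤ t := le_max_left _ _
    have hjt : j ≤ t := le_trans (le_max_left _ _) (le_max_right _ _)
    have hmt : m ≤ t := le_trans (le_max_right _ _) (le_max_right _ _)
    have hch : t = i ∨ t = j ∨ t = m := by
      rcases max_choice i (max j m) with h' | h'
      · exact Or.inl h'
      · rcases max_choice j m with h'' | h'' <;> rw [ht_def, h'] <;> [exact Or.inr (Or.inl h''); exact Or.inr (Or.inr h'')]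
    have h2t : 2 ≤ t := by omega
    have htk : t < k := by omega
    exact case_max α β (x t) (x k) (x m) (x i) (x j) Q P hα hβ hQ hP
      (hxne m i him.symm) (hxne i j hij) (hxne k m hkm)
      (hMle m i t hmt hit)
      (hbig_aux x h0 h1 hrec k m i j t h2t hmt htk hij) C3 C2
  · -- m is the maximum
    set t := max i (max j k) with ht_def
    have hit : i ≤ t := le_max_left _ _
    have hjt : j ≤ t := le_trans (le_max_left _ _) (le_max_right _ _)
    have hkt : k ≤ t := le_trans (le_max_right _ _) (le_max_right _ _)
    have hch : t = i ∨ t = j ∨ t = k := by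
      rcases max_choice i (max j k) with h' | h'
      · exact Or.inl h'
      · rcases max_choice j k with h'' | h'' <;> rw [ht_def, h'] <;> [exact Or.inr (Or.inl h''); exact Or.inr (Or.inr h'')]
    have h2t : 2 ≤ t := by omega
    have htm : t < m := by omega
    rw [abs_sub_comm (x k) (x m)] at C4
    rw [add_comm (Q / |x k - x i| ^ α)] at C2
    exact case_max α β (x t) (x m) (x k) (x i) (x j) Q P hα hβ hQ hP
      (hxne k i hik.symm) (hxne i j hij) (hxne m k hkm.symm)
      (hMle k i t hkt hit)
      (hbig_aux x h0 h1 hrec m k i j t h2t hkt htm hij) C4 C2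

lemma symBidi_subset (α β : ℝ) (hβ0 : 0 ≤ β) (T T' : Finset Link) (hsub : T' ⊆ T)
    (h : SymBidiFeasible α β T) : SymBidiFeasible α β T' := by
  obtain ⟨Pw, hpos, hfe⟩ := h
  refine ⟨Pw, fun l hl => hpos l (hsub hl), fun l hl => ?_⟩
  obtain ⟨c1, c2⟩ := hfe l (hsub hl)
  have hterm : ∀ (y : Point) (l' : Link), l' ∈ T.erase l →
      0 ≤ (Pw l').1 / dist l'.1 y ^ α + (Pw l').2 / dist l'.2 y ^ α := by
    intro y l' hl'
    have hmem := Finset.mem_of_mem_erase hl'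
    have p1 := (hpos l' hmem).1
    have p2 : 0 < (Pw l').2 := (hpos l' hmem).2 ▸ p1
    exact add_nonneg (div_nonneg p1.le (Real.rpow_nonneg dist_nonneg _))
      (div_nonneg p2.le (Real.rpow_nonneg dist_nonneg _))
  have hsum : ∀ y : Point,
      ∑ l' ∈ T'.erase l, ((Pw l').1 / dist l'.1 y ^ α + (Pw l').2 / dist l'.2 y ^ α)
        ≤ ∑ l' ∈ T.erase l, ((Pw l').1 / dist l'.1 y ^ α + (Pw l').2 / dist l'.2 y ^ α) := by
    intro y
    exact Finset.sum_le_sum_of_subset_of_nonneg (Finset.erase_subset_erase _ hsub)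
      (fun l' hl' _ => hterm y l' hl')
  constructor
  · exact le_trans (mul_le_mul_of_nonneg_left (hsum l.2) hβ0) c1
  · exact le_trans (mul_le_mul_of_nonneg_left (hsum l.1) hβ0) c2

lemma slot_pairs (α β : ℝ) (hα : 2 < α) (hβ : 1 ≤ β) (x : ℕ → ℝ)
    (h0 : x 0 = 0) (h1 : x 1 = 1) (hrec : ∀ i, 2 ≤ i → x i = 2 * x (i - 1) ^ 2)
    (T : Finset Link) (hfe : SymBidiFeasible α β T)
    (l l' : Link) (hl : l ∈ T) (hl' : l' ∈ T)
    (i j k m : ℕ) (e1 : l.1 = ptOnLine (x i)) (e2 : l.2 = ptOnLine (x j))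
    (e3 : l'.1 = ptOnLine (x k)) (e4 : l'.2 = ptOnLine (x m))
    (hij : i ≠ j) (hkm : k ≠ m) :
    (l'.1 = l.1 ∧ l'.2 = l.2) ∨ (l'.1 = l.2 ∧ l'.2 = l.1) := by
  by_cases heq : l = l'
  · left; rw [heq]; exact ⟨rfl, rfl⟩
  have hfe2 : SymBidiFeasible α β {l, l'} :=
    symBidi_subset α β (by linarith) T _ 
      (Finset.insert_subset hl (Finset.singleton_subset_iff.mpr hl')) hfe
  obtain ⟨P, Q, hP, hQ, C1, C2, C3, C4⟩ := pair_constraints α β l l' heq hfe2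
  have hptne := ptne x h0 h1 hrec
  have hptinj := pt_inj x h0 h1 hrec
  have rpos : ∀ a b : Point, a ≠ b → 0 < dist a b ^ α := fun a b h =>
    Real.rpow_pos_of_pos (dist_pos.mpr h) α
  have tnn : ∀ (c : ℝ) (a b : Point), 0 < c → 0 ≤ c / dist a b ^ α := fun c a b hc =>
    div_nonneg hc.le (Real.rpow_nonneg dist_nonneg _)
  -- index ne translations to points
  have pne : ∀ p q : ℕ, p ≠ q → ptOnLine (x p) ≠ ptOnLine (x q) := hptne
  by_cases hik : i = k
  · by_cases hjm : j = m
    · left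
      constructor
      · rw [e3, e1, hik]
      · rw [e4, e2, hjm]
    · exfalso
      have hac : l'.1 = l.1 := by rw [e3, e1, hik]
      have hab : l.1 ≠ l.2 := by rw [e1, e2]; exact pne i j hij
      have had : l.1 ≠ l'.2 := by rw [e1, e4]; intro h; exact hkm (hik ▸ hptinj i m h)
      have hbd : l'.2 ≠ l.2 := by rw [e4, e2]; exact pne m j (fun h => hjm h.symm)
      rw [hac] at C1 C3
      have s1 := strip_beta β _ _ hβ
        (add_nonneg (tnn Q _ _ hQ) (tnn Q _ _ hQ)) C1
      have hQP : Q < P := lt_of_interf P Q _ _ hQ (rpos _ _ hab) (rpos _ _ hbd) s1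
      have s3 := strip_beta β _ _ hβ
        (add_nonneg (tnn P _ _ hP) (tnn P _ _ hP)) C3
      have hPQ : P < Q := lt_of_interf Q P _ _ hP (rpos _ _ had)
        (rpos _ _ (by rw [e2, e4]; exact pne j m hjm)) s3
      linarith
  · by_cases him : i = m
    · by_cases hjk : j = k
      · right
        constructor
        · rw [e3, e2, hjk]
        · rw [e4, e1, him]
      · exfalso
        have had : l'.2 = l.1 := by rw [e4, e1, him]
        have hab : l.1 ≠ l.2 := by rw [e1, e2]; exact pne i j hij
        rw [had] at C1 C4
        rw [add_comm (Q / dist l'.1 l.2 ^ α)] at C1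
        have s1 := strip_beta β _ _ hβ
          (add_nonneg (tnn Q _ _ hQ) (tnn Q _ _ hQ)) C1
        have hQP : Q < P := lt_of_interf P Q _ _ hQ (rpos _ _ hab)
          (rpos _ _ (by rw [e3, e2]; exact pne k j (fun h => hjk h.symm))) s1
        rw [dist_comm l'.1 l.1] at C4
        have s4 := strip_beta β _ _ hβ
          (add_nonneg (tnn P _ _ hP) (tnn P _ _ hP)) C4
        have hPQ : P < Q := lt_of_interf Q P _ _ hP
          (rpos _ _ (by rw [e1, e3]; exact pne i k hik))
          (rpos _ _ (by rw [e2, e3]; exact pne j k (fun h => hjk h))) s4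
        linarith
    · by_cases hjk : j = k
      · exfalso
        have hbc : l'.1 = l.2 := by rw [e3, e2, hjk]
        rw [hbc] at C2 C3
        rw [dist_comm l.2 l.1] at C2
        have s2 := strip_beta β _ _ hβ
          (add_nonneg (tnn Q _ _ hQ) (tnn Q _ _ hQ)) C2
        have hQP : Q < P := lt_of_interf P Q _ _ hQ
          (rpos _ _ (by rw [e1, e2]; exact pne i j hij))
          (rpos _ _ (by rw [e4, e1]; exact pne m i (fun h => him h.symm))) s2
        rw [add_comm (P / dist l.1 l'.2 ^ α)] at C3
        have s3 := strip_beta β _ _ hβ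
          (add_nonneg (tnn P _ _ hP) (tnn P _ _ hP)) C3
        have hPQ : P < Q := lt_of_interf Q P _ _ hP
          (rpos _ _ (by rw [e2, e4]; exact pne j m (by omega)))
          (rpos _ _ (by rw [e1, e4]; exact pne i m him)) s3
        linarith
      · by_cases hjm : j = m
        · exfalso
          have hbd : l'.2 = l.2 := by rw [e4, e2, hjm]
          rw [hbd] at C2 C4
          rw [dist_comm l.2 l.1] at C2
          rw [add_comm (Q / dist l'.1 l.1 ^ α)] at C2
          have s2 := strip_beta β _ _ hβ
            (add_nonneg (tnn Q _ _ hQ) (tnn Q _ _ hQ)) C2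
          have hQP : Q < P := lt_of_interf P Q _ _ hQ
            (rpos _ _ (by rw [e1, e2]; exact pne i j hij))
            (rpos _ _ (by rw [e3, e1]; exact pne k i (fun h => hik h.symm))) s2
          rw [dist_comm l.2 l'.1] at C4
          rw [add_comm (P / dist l.1 l'.1 ^ α)] at C4
          have s4 := strip_beta β _ _ hβ
            (add_nonneg (tnn P _ _ hP) (tnn P _ _ hP)) C4
          have hPQ : P < Q := lt_of_interf Q P _ _ hP
            (rpos _ _ (by rw [e3, e2]; exact pne k j (fun h => hjk h.symm)))
            (rpos _ _ (by rw [e1, e3]; exact pne i k hik)) s4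
          linarith
        · exfalso
          have el : (ptOnLine (x i), ptOnLine (x j)) = l := by
            rw [← e1, ← e2]
          have el' : (ptOnLine (x k), ptOnLine (x m)) = l' := by
            rw [← e3, ← e4]
          apply two_pairs_infeasible α β hα hβ x h0 h1 hrec i j k m hij hkm hik him hjk hjm
          rw [el, el']
          exact hfe2

/-- A chain of length `nn` from `v` to `r` along relation `rel`. -/
def chainTo (rel : Point → Point → Prop) (r : Point) : ℕ → Point → Prop
  | 0, v => v = r
  | nn + 1, v => ∃ c, rel v c ∧ chainTo rel r nn c

lemma chainTo_of_rtg (rel : Point → Point → Prop) (r v : Point)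
    (h : Relation.ReflTransGen rel v r) : ∃ nn, chainTo rel r nn v := by
  induction h using Relation.ReflTransGen.head_induction_on with
  | refl => exact ⟨0, rfl⟩
  | head hstep _ ih =>
    obtain ⟨nn, hc⟩ := ih
    exact ⟨nn + 1, _, hstep, hc⟩

@[simp] lemma chainTo_zero (rel : Point → Point → Prop) (r v : Point) :
    chainTo rel r 0 v ↔ v = r := Iff.rfl

@[simp] lemma chainTo_succ (rel : Point → Point → Prop) (r v : Point) (nn : ℕ) :
    chainTo rel r (nn + 1) v ↔ ∃ c, rel v c ∧ chainTo rel r nn c := Iff.rfl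

theorem symmetric_bidirectional_lower_bound' (α β : ℝ) (hα : 2 < α) (hβ : 1 ≤ β)
    (n : ℕ) (x : ℕ → ℝ) (h0 : x 0 = 0) (h1 : x 1 = 1)
    (hrec : ∀ i, 2 ≤ i → x i = 2 * x (i - 1) ^ 2) :
    (∀ i j k m : ℕ, i < n → j < n → k < n → m < n →
      i ≠ j → k ≠ m → i ≠ k → i ≠ m → j ≠ k → j ≠ m →
      ¬SymBidiFeasible α β
        {(ptOnLine (x i), ptOnLine (x j)), (ptOnLine (x k), ptOnLine (x m))}) ∧
    (∀ L : Finset Link,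
      (∀ l ∈ L, (∃ i < n, l.1 = ptOnLine (x i)) ∧
                (∃ j < n, l.2 = ptOnLine (x j)) ∧ l.1 ≠ l.2) →
      (∀ i j : ℕ, i < n → j < n →
        Relation.ReflTransGen (fun u v => (u, v) ∈ L ∨ (v, u) ∈ L)
          (ptOnLine (x i)) (ptOnLine (x j))) →
      ∀ (k : ℕ) (S : Fin k → Finset Link), IsPartition L S →
        (∀ i, SymBidiFeasible α β (S i)) → n - 1 ≤ k) := by
  constructor
  · intro i j k m _ _ _ _ hij hkm hik him hjk hjm
    exact two_pairs_infeasible α β hα hβ x h0 h1 hrec i j k m hij hkm hik him hjk hjm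
  · intro L hL hConn k S hPart hFeas
    rcases le_or_gt n 1 with hn | hn
    · omega
    set rel : Point → Point → Prop := fun u v => (u, v) ∈ L ∨ (v, u) ∈ L with hrel_def
    set r : Point := ptOnLine (x 0) with hr_def
    set d : Point → ℕ :=
      fun v => if h : ∃ nn, chainTo rel r nn v then Nat.find h else 0 with hd_def
    have F1 : ∀ (v : Point) (h : ∃ nn, chainTo rel r nn v), chainTo rel r (d v) v := by
      intro v h
      simp only [hd_def]
      rw [dif_pos h]
      exact Nat.find_spec h
    have F2 : ∀ (v : Point) (nn : ℕ), chainTo rel r nn v → d v ≤ nn := by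
      intro v nn h
      simp only [hd_def]
      rw [dif_pos ⟨nn, h⟩]
      exact Nat.find_min' _ h
    have hConn0 : ∀ p, p < n → ∃ nn, chainTo rel r nn (ptOnLine (x p)) := by
      intro p hp
      exact chainTo_of_rtg rel r _ (hConn p 0 hp (by omega))
    set D : Finset Point := ((Finset.range n).image (fun p => ptOnLine (x p))).erase r
      with hD_def
    have hrmem : r ∈ (Finset.range n).image (fun p => ptOnLine (x p)) :=
      Finset.mem_image.mpr ⟨0, Finset.mem_range.mpr (by omega), by rw [hr_def]⟩
    have hDcard : D.card = n - 1 := by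
      rw [hD_def, Finset.card_erase_of_mem hrmem, Finset.card_image_of_injOn, Finset.card_range]
      intro a _ b _ hab
      exact pt_inj x h0 h1 hrec a b hab
    have hΦ : ∀ v ∈ D, ∃ idx : Fin k, ∃ c,
        ((v, c) ∈ S idx ∨ (c, v) ∈ S idx) ∧ d c < d v := by
      intro v hv
      rw [hD_def] at hv
      obtain ⟨hvr, hvim⟩ := Finset.mem_erase.mp hv
      obtain ⟨p, hp, hpv⟩ := Finset.mem_image.mp hvim
      have hex : ∃ nn, chainTo rel r nn v := hpv ▸ hConn0 p (Finset.mem_range.mp hp)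
      have hchain := F1 v hex
      have hd0 : d v ≠ 0 := by
        intro hz
        rw [hz, chainTo_zero] at hchain
        exact hvr hchain
      obtain ⟨nn, hnn⟩ := Nat.exists_eq_succ_of_ne_zero hd0
      rw [hnn, chainTo_succ] at hchain
      obtain ⟨c, hrc, hcc⟩ := hchain
      have hdc : d c ≤ nn := F2 c nn hcc
      simp only [hrel_def] at hrc
      rcases hrc with hmem | hmem
      · obtain ⟨idx, hidx⟩ := hPart.2.1 (v, c) hmem
        exact ⟨idx, c, Or.inl hidx, by omega⟩
      · obtain ⟨idx, hidx⟩ := hPart.2.1 (c, v) hmem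
        exact ⟨idx, c, Or.inr hidx, by omega⟩
    set f : Point → ℕ := fun v =>
      if h : ∃ idx : Fin k, ∃ c, ((v, c) ∈ S idx ∨ (c, v) ∈ S idx) ∧ d c < d v
      then h.choose.val else 0 with hf_def
    have hmaps : ∀ v ∈ D, f v ∈ Finset.range k := by
      intro v hv
      have hv' := hΦ v hv
      simp only [hf_def]
      rw [dif_pos hv']
      exact Finset.mem_range.mpr hv'.choose.isLt
    have hinj : Set.InjOn f D := by
      intro v hv w hw hfvw
      have hv' := hΦ v hv
      have hw' := hΦ w hw
      simp only [hf_def] at hfvw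
      rw [dif_pos hv', dif_pos hw'] at hfvw
      have hidx : hw'.choose = hv'.choose := (Fin.ext hfvw).symm
      obtain ⟨cv, hcv, hdcv⟩ := hv'.choose_spec
      obtain ⟨cw, hcw, hdcw⟩ := hw'.choose_spec
      rw [hidx] at hcw
      by_contra hvw
      -- get endpoint index data for the two links
      have getIdx : ∀ l : Link, l ∈ S hv'.choose →
          ∃ pi pj : ℕ, l.1 = ptOnLine (x pi) ∧ l.2 = ptOnLine (x pj) ∧ pi ≠ pj := by
        intro l hl
        obtain ⟨⟨pi, _, ei⟩, ⟨pj, _, ej⟩, hne12⟩ := hL l (hPart.1 _ hl)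
        exact ⟨pi, pj, ei, ej, fun h => hne12 (by rw [ei, ej, h])⟩
      have main : ∀ lv lw : Link, lv ∈ S hv'.choose → lw ∈ S hv'.choose →
          (lw.1 = lv.1 ∧ lw.2 = lv.2) ∨ (lw.1 = lv.2 ∧ lw.2 = lv.1) := by
        intro lv lw hlv hlw
        obtain ⟨pi, pj, ei, ej, hne1⟩ := getIdx lv hlv
        obtain ⟨pk, pm, ek, em, hne2⟩ := getIdx lw hlw
        exact slot_pairs α β hα hβ x h0 h1 hrec _ (hFeas _) lv lw hlv hlw
          pi pj pk pm ei ej ek em hne1 hne2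
      rcases hcv with hcv | hcv
      · rcases hcw with hcw | hcw
        · rcases main (v, cv) (w, cw) hcv hcw with ⟨ea, eb⟩ | ⟨ea, eb⟩
          · exact hvw (show w = v from ea).symm
          · have d1 : d w = d cv := congrArg d (show w = cv from ea)
            have d2 : d cw = d v := congrArg d (show cw = v from eb)
            omega
        · rcases main (v, cv) (cw, w) hcv hcw with ⟨ea, eb⟩ | ⟨ea, eb⟩
          · have d1 : d cw = d v := congrArg d (show cw = v from ea)
            have d2 : d w = d cv := congrArg d (show w = cv from eb)
            omega
          · exact hvw (show w = v from eb).symm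
      · rcases hcw with hcw | hcw
        · rcases main (cv, v) (w, cw) hcv hcw with ⟨ea, eb⟩ | ⟨ea, eb⟩
          · have d1 : d w = d cv := congrArg d (show w = cv from ea)
            have d2 : d cw = d v := congrArg d (show cw = v from eb)
            omega
          · exact hvw (show w = v from ea).symm
        · rcases main (cv, v) (cw, w) hcv hcw with ⟨ea, eb⟩ | ⟨ea, eb⟩
          · exact hvw (show w = v from eb).symm
          · have d1 : d cw = d v := congrArg d (show cw = v from ea)
            have d2 : d w = d cv := congrArg d (show w = cv from eb)
            omega
    have hcard := Finset.card_le_card_of_injOn f hmaps hinj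
    rw [hDcard, Finset.card_range] at hcard
    exact hcard


/-- for the collinear points `x₀ = 0`, `x₁ = 1`,
`xᵢ = 2·xᵢ₋₁²`, no two disjoint pairs are simultaneously bidirectionally
feasible with symmetric powers; consequently any set of pairs whose links
strongly connect these `n` points needs at least `n − 1` slots in the
symmetric bidirectional model. -/
theorem symmetric_bidirectional_lower_bound (α β : ℝ) (hα : 2 < α) (hβ : 1 ≤ β)
    (n : ℕ) (x : ℕ → ℝ) (h0 : x 0 = 0) (h1 : x 1 = 1)
    (hrec : ∀ i, 2 ≤ i → x i = 2 * x (i - 1) ^ 2) :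
    (∀ i j k m : ℕ, i < n → j < n → k < n → m < n →
      i ≠ j → k ≠ m → i ≠ k → i ≠ m → j ≠ k → j ≠ m →
      ¬SymBidiFeasible α β
        {(ptOnLine (x i), ptOnLine (x j)), (ptOnLine (x k), ptOnLine (x m))}) ∧
    (∀ L : Finset Link,
      (∀ l ∈ L, (∃ i < n, l.1 = ptOnLine (x i)) ∧
                (∃ j < n, l.2 = ptOnLine (x j)) ∧ l.1 ≠ l.2) →
      (∀ i j : ℕ, i < n → j < n →
        Relation.ReflTransGen (fun u v => (u, v) ∈ L ∨ (v, u) ∈ L)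
          (ptOnLine (x i)) (ptOnLine (x j))) →
      ∀ (k : ℕ) (S : Fin k → Finset Link), IsPartition L S →
        (∀ i, SymBidiFeasible α β (S i)) → n - 1 ≤ k) := by
  exact symmetric_bidirectional_lower_bound' α β hα hβ n x h0 h1 hrec
end
end
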